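/- Let T be a subgroup of K^× and 𝒟 ⊆ 𝒢_{K|T} a closed subspace. There exists a T-visible valuation v of K with Z_K(𝒟) = I_v ∩ 𝒢_{K|T} and 𝒟 = D_v ∩ 𝒢_{K|T} if and only if (1) Z_K(𝒟) ≠ 𝒟 and (2) C_K(Z_K(𝒟)) ∩ 𝒢_{K|T} = 𝒟. -/

import Mathlib

/- Common definitions: Milnor K-theory of fields (possibly modulo a subgroup of `Kˣ`),
its rationalization, the dual space `𝒢_K` with the relation of alternating pairs,
and valuation-theoretic subspaces, following the paper. -/

set_option synthInstance.maxHeartbeats 400000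
set_option maxHeartbeats 1000000

open scoped TensorProduct

namespace Paper

section Milnor

variable (K : Type) [Field K]

/-- The Steinberg relation together with the relation killing a subgroup `T ≤ Kˣ`; used to
present `K^M_*(K|T) := K^M_*(K)/⟨T⟩` as a quotient of the tensor algebra of the
`ℤ`-module `Kˣ`. -/
inductive MilnorRel (T : Subgroup Kˣ) :
    TensorAlgebra ℤ (Additive Kˣ) → TensorAlgebra ℤ (Additive Kˣ) → Prop
  | steinberg (x y : Kˣ) (h : (x : K) + (y : K) = 1) :
      MilnorRel T (TensorAlgebra.ι ℤ (Additive.ofMul x) * TensorAlgebra.ι ℤ (Additive.ofMul y)) 0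
  | subgroup (x : Kˣ) (h : x ∈ T) :
      MilnorRel T (TensorAlgebra.ι ℤ (Additive.ofMul x)) 0

/-- The Milnor K-theory ring modulo a subgroup: `K^M_*(K|T)`.  For `T = ⊥` this is
Milnor K-theory `K^M_*(K)` itself. -/
abbrev MilnorK (T : Subgroup Kˣ) := RingQuot (MilnorRel K T)

/-- The canonical quotient map from the tensor algebra. -/
noncomputable def milnorMk (T : Subgroup Kˣ) :
    TensorAlgebra ℤ (Additive Kˣ) →+* MilnorK K T :=
  RingQuot.mkRingHom (MilnorRel K T)

/-- The symbol `{x}` in degree one of `K^M_*(K|T)`. -/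
noncomputable def symbol (T : Subgroup Kˣ) (x : Kˣ) : MilnorK K T :=
  milnorMk K T (TensorAlgebra.ι ℤ (Additive.ofMul x))

/-- The degree `n` part of `K^M_*(K|T)`, i.e. the image of the degree `n` part of the
tensor algebra. -/
noncomputable def milnorDeg (T : Subgroup Kˣ) (n : ℕ) : AddSubgroup (MilnorK K T) :=
  AddSubgroup.map (milnorMk K T).toAddMonoidHom
    (Submodule.toAddSubgroup
      ((LinearMap.range (TensorAlgebra.ι ℤ (M := Additive Kˣ))) ^ n))

/-- A ring isomorphism between Milnor K-rings is graded if it maps each degree onto the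
corresponding degree. -/
def IsGradedMilnorIso {K L : Type} [Field K] [Field L] {T : Subgroup Kˣ} {S : Subgroup Lˣ}
    (φ : MilnorK K T ≃+* MilnorK L S) : Prop :=
  ∀ n : ℕ, AddSubgroup.map φ.toRingHom.toAddMonoidHom (milnorDeg K T n) = milnorDeg L S n

/-- `𝒦_*(K|T) := ℚ ⊗_ℤ K^M_*(K|T)`. -/
abbrev MilnorKQ (T : Subgroup Kˣ) := ℚ ⊗[ℤ] MilnorK K T

/-- The symbol `{x}` in degree one of `𝒦_*(K|T)`. -/
noncomputable def symbolQ (T : Subgroup Kˣ) (x : Kˣ) : MilnorKQ K T :=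
  1 ⊗ₜ symbol K T x

/-- The degree `n` part of `𝒦_*(K|T)`. -/
noncomputable def milnorDegQ (T : Subgroup Kˣ) (n : ℕ) : Submodule ℚ (MilnorKQ K T) :=
  Submodule.span ℚ
    ((fun a => (1 : ℚ) ⊗ₜ a) ''
      ((milnorMk K T) ''
        ((LinearMap.range (TensorAlgebra.ι ℤ (M := Additive Kˣ))) ^ n : Submodule ℤ _)))

/-- An isomorphism of the graded `ℚ`-algebras `𝒦_*(K|T)` is graded if it maps each degree
onto the corresponding degree. -/
def IsGradedIsoQ {K L : Type} [Field K] [Field L] {T : Subgroup Kˣ} {S : Subgroup Lˣ}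
    (φ : MilnorKQ K T ≃ₐ[ℚ] MilnorKQ L S) : Prop :=
  ∀ n : ℕ, Submodule.map φ.toLinearMap (milnorDegQ K T n) = milnorDegQ L S n

variable {K}

/-- The ring homomorphism `K^M_*(K|T) → K^M_*(L|S)` induced by a field embedding `σ`
with `σ(T) ⊆ S`. -/
noncomputable def milnorMap {L : Type} [Field L] (σ : K →+* L)
    (T : Subgroup Kˣ) (S : Subgroup Lˣ)
    (h : ∀ x : Kˣ, x ∈ T → Units.map (σ : K →* L) x ∈ S) :
    MilnorK K T →+* MilnorK L S :=
  RingQuot.lift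
    ⟨(TensorAlgebra.lift ℤ
        (((milnorMk L S).toAddMonoidHom.comp
          ((TensorAlgebra.ι ℤ (M := Additive Lˣ)).toAddMonoidHom.comp
            (MonoidHom.toAdditive (Units.map (σ : K →* L))))).toIntLinearMap)).toRingHom,
     by
      rintro a b (⟨x, y, hxy⟩ | ⟨x, hx⟩)
      · simp only [AlgHom.toRingHom_eq_coe, RingHom.coe_coe, map_mul, map_zero,
          TensorAlgebra.lift_ι_apply]
        show milnorMk L S (TensorAlgebra.ι ℤ (Additive.ofMul (Units.map (σ : K →* L) x))) *
          milnorMk L S (TensorAlgebra.ι ℤ (Additive.ofMul (Units.map (σ : K →* L) y))) = 0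
        rw [← map_mul]
        have hsum : ((Units.map (σ : K →* L) x : Lˣ) : L) +
            ((Units.map (σ : K →* L) y : Lˣ) : L) = 1 := by
          simpa using congrArg σ hxy
        exact (RingQuot.mkRingHom_rel
          (MilnorRel.steinberg (T := S) _ _ hsum)).trans (map_zero _)
      · simp only [AlgHom.toRingHom_eq_coe, RingHom.coe_coe, map_zero,
          TensorAlgebra.lift_ι_apply]
        show milnorMk L S (TensorAlgebra.ι ℤ (Additive.ofMul (Units.map (σ : K →* L) x))) = 0
        exact (RingQuot.mkRingHom_rel
          (MilnorRel.subgroup (T := S) _ (h x hx))).trans (map_zero _)⟩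

/-- The induced ring homomorphism `𝒦_*(K|T) → 𝒦_*(L|S)`. -/
noncomputable def milnorMapQ {L : Type} [Field L] (σ : K →+* L)
    (T : Subgroup Kˣ) (S : Subgroup Lˣ)
    (h : ∀ x : Kˣ, x ∈ T → Units.map (σ : K →* L) x ∈ S) :
    MilnorKQ K T →+* MilnorKQ L S :=
  (Algebra.TensorProduct.map (AlgHom.id ℤ ℚ) (milnorMap σ T S h).toIntAlgHom).toRingHom

end Milnor

section Dual

variable (K : Type) [Field K]

/-- `𝒢_K := Hom_ℤ(Kˣ, ℚ)`. -/
abbrev GK := Additive Kˣ →ₗ[ℤ] ℚ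

/-- The weak topology on `𝒢_K`: the topology of pointwise convergence, `ℚ` being discrete. -/
noncomputable def gkTopology : TopologicalSpace (GK K) :=
  TopologicalSpace.induced (fun (f : GK K) (x : Additive Kˣ) => f x)
    (@Pi.topologicalSpace _ _ (fun _ => ⊥))

/-- A subspace of `𝒢_K` is closed if it is closed in the weak topology. -/
def IsClosedSubspace (H : Submodule ℚ (GK K)) : Prop :=
  @IsClosed _ (gkTopology K) (H : Set (GK K))

variable {K}

/-- `f, g ∈ 𝒢_K` form an alternating pair: `ℛ_K(f,g)`. -/
def AltPair (f g : GK K) : Prop :=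
  ∀ x y : Kˣ, (x : K) + (y : K) = 1 →
    f (Additive.ofMul x) * g (Additive.ofMul y) = f (Additive.ofMul y) * g (Additive.ofMul x)

variable (K)

/-- `𝒢_{K|T}`: the functionals vanishing on `T`. -/
def GKrel (T : Subgroup Kˣ) : Submodule ℚ (GK K) where
  carrier := {f | ∀ x ∈ T, f (Additive.ofMul x) = 0}
  add_mem' := by intro f g hf hg x hx; simp [hf x hx, hg x hx]
  zero_mem' := by intro x hx; simp
  smul_mem' := by intro c f hf x hx; simp [hf x hx]

/-- The `ℛ_K`-centralizer `C_K(𝒟)` of a subspace `𝒟 ⊆ 𝒢_K`. -/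
def RCentralizer (D : Submodule ℚ (GK K)) : Submodule ℚ (GK K) where
  carrier := {f | ∀ g ∈ D, AltPair f g}
  add_mem' := by
    intro f1 f2 h1 h2 g hg x y hxy
    have e1 := h1 g hg x y hxy
    have e2 := h2 g hg x y hxy
    simp only [LinearMap.add_apply]
    rw [add_mul, add_mul, e1, e2]
  zero_mem' := by intro g hg x y hxy; simp
  smul_mem' := by
    intro c f hf g hg x y hxy
    simp only [LinearMap.smul_apply, smul_eq_mul]
    rw [mul_assoc, mul_assoc, hf g hg x y hxy]

/-- The `ℛ_K`-centre `Z_K(𝒟)` of a subspace `𝒟 ⊆ 𝒢_K`. -/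
def RCentre (D : Submodule ℚ (GK K)) : Submodule ℚ (GK K) :=
  D ⊓ RCentralizer K D

/-- The orthogonal subgroup `ℋ^⊥ ⊆ Kˣ` of a subspace `ℋ ⊆ 𝒢_K`. -/
def perpSubgroup (H : Submodule ℚ (GK K)) : Subgroup Kˣ where
  carrier := {x | ∀ f ∈ H, f (Additive.ofMul x) = 0}
  one_mem' := by
    intro f hf
    show f (Additive.ofMul 1) = 0
    rw [ofMul_one, map_zero]
  mul_mem' := by
    intro x y hx hy f hf
    have : Additive.ofMul (x * y) = Additive.ofMul x + Additive.ofMul y := rfl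
    rw [this, map_add, hx f hf, hy f hf, add_zero]
  inv_mem' := by
    intro x hx f hf
    have : Additive.ofMul x⁻¹ = -Additive.ofMul x := rfl
    rw [this, map_neg, hx f hf, neg_zero]

/-- `I_v := 𝒢_{K|U_v}` for a valuation (given by its valuation subring `A`). -/
noncomputable def Ival (A : ValuationSubring K) : Submodule ℚ (GK K) := GKrel K A.unitGroup

/-- `D_v := 𝒢_{K|U_v^1}` for a valuation (given by its valuation subring `A`). -/
def Dval (A : ValuationSubring K) : Submodule ℚ (GK K) := GKrel K A.principalUnitGroup

/-- `A` is the valuation ring of the minimal valuation `v_ℐ` attached to a valuative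
subspace `ℐ`: one has `ℐ ⊆ I_v`, and `v` is minimal with this property.  Valuations are
ordered by coarsening (`v ≤ w` iff `v` is a coarsening of `w`, i.e. `𝒪_w ⊆ 𝒪_v`), so
minimality of the valuation means maximality of the valuation subring. -/
def IsMinValuationFor (A : ValuationSubring K) (I : Submodule ℚ (GK K)) : Prop :=
  I ≤ Ival K A ∧ ∀ B : ValuationSubring K, I ≤ Ival K B → B ≤ A

/-- The subgroup of `Kˣ` consisting of the units of a subfield `k ⊆ K`. -/
def subfieldUnits (k : Subfield K) : Subgroup Kˣ where
  carrier := {x | (x : K) ∈ k}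
  one_mem' := k.one_mem
  mul_mem' := by intro a b ha hb; exact k.mul_mem ha hb
  inv_mem' := by
    intro a ha
    show ((a⁻¹ : Kˣ) : K) ∈ k
    rw [Units.val_inv_eq_inv_val]
    exact k.inv_mem ha

/-- The valuation `v` (given by its valuation subring `A`) is `T`-visible:
`I_v ∩ 𝒢_{K|T} = Z_K(D_v ∩ 𝒢_{K|T}) ≠ D_v ∩ 𝒢_{K|T}`, and `v = v_ℐ` for
`ℐ = I_v ∩ 𝒢_{K|T}`. -/
def IsVisible (T : Subgroup Kˣ) (A : ValuationSubring K) : Prop :=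
  Ival K A ⊓ GKrel K T = RCentre K (Dval K A ⊓ GKrel K T) ∧
  Ival K A ⊓ GKrel K T ≠ Dval K A ⊓ GKrel K T ∧
  IsMinValuationFor K A (Ival K A ⊓ GKrel K T)

/-- A subgroup of the value group `vK = Kˣ/U_v` of the valuation corresponding to `A` is
represented by a subgroup `H` of `Kˣ` containing `U_v = A.unitGroup`; `H/U_v` is convex in
`vK` iff whenever `x ∈ H` and `0 ≤ v(y) ≤ v(x)`, also `y ∈ H`. -/
def IsConvexInValueGroup (A : ValuationSubring K) (H : Subgroup Kˣ) : Prop :=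
  A.unitGroup ≤ H ∧
    ∀ x y : Kˣ, x ∈ H → (y : K) ∈ A → ((x : K) * (y : K)⁻¹) ∈ A → y ∈ H

/-- The residue field `kv` of the restriction of the valuation to a subfield `k ⊆ K`,
as a subfield of the residue field `Kv`; it is the set of residues of elements
of `k ∩ 𝒪_v` (which is already closed under the field operations). -/
noncomputable def residueSubfield (A : ValuationSubring K) (k : Subfield K) :
    Subfield (IsLocalRing.ResidueField A) :=
  Subfield.closure ((IsLocalRing.residue A) '' {a : A | (a : K) ∈ k})

end Dual

section KQ

variable (K : Type) [Field K]

/-- A subgroup `T ≤ Kˣ` viewed as a `ℤ`-submodule of `Additive Kˣ`. -/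
def subgroupToSubmodule (T : Subgroup Kˣ) : Submodule ℤ (Additive Kˣ) :=
  AddSubgroup.toIntSubmodule (Subgroup.toAddSubgroup T)

/-- `𝒦_{K|T} := ℚ ⊗_ℤ (Kˣ/T) = 𝒦_1(K|T)`. -/
abbrev KQ (T : Subgroup Kˣ) := ℚ ⊗[ℤ] (Additive Kˣ ⧸ subgroupToSubmodule K T)

/-- The class of `x ∈ Kˣ` in `𝒦_{K|T}`; this is the canonical map `Kˣ → 𝒦_{K|T}`. -/
noncomputable def symbQ (T : Subgroup Kˣ) (x : Kˣ) : KQ K T :=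
  (1 : ℚ) ⊗ₜ Submodule.Quotient.mk (Additive.ofMul x)

/-- The map `Kˣ → 𝒦_1(K|T)`, `x ↦ {x}`, as a `ℤ`-linear map on `Additive Kˣ`. -/
noncomputable def symbolQLinear (T : Subgroup Kˣ) : Additive Kˣ →ₗ[ℤ] MilnorKQ K T :=
  ((Algebra.TensorProduct.includeRight :
      MilnorK K T →ₐ[ℤ] MilnorKQ K T).toLinearMap.toAddMonoidHom.comp
    ((milnorMk K T).toAddMonoidHom.comp
      (TensorAlgebra.ι ℤ (M := Additive Kˣ)).toAddMonoidHom)).toIntLinearMap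

/-- The canonical identification map `𝒦_{K|T} = 𝒦_1(K|T) → 𝒦_*(K|T)` onto degree one. -/
noncomputable def KQtoMilnor (T : Subgroup Kˣ) : KQ K T →ₗ[ℚ] MilnorKQ K T :=
  LinearMap.liftBaseChange ℚ <|
    Submodule.liftQ (subgroupToSubmodule K T) (symbolQLinear K T)
      (by
        intro x hx
        have h2 := RingQuot.mkRingHom_rel (MilnorRel.subgroup (T := T) (Additive.toMul x) hx)
        simp only [LinearMap.mem_ker]
        show (Algebra.TensorProduct.includeRight : MilnorK K T →ₐ[ℤ] MilnorKQ K T)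
          (milnorMk K T (TensorAlgebra.ι ℤ x)) = 0
        rw [show milnorMk K T (TensorAlgebra.ι ℤ x) = 0 from h2.trans (map_zero _), map_zero])

/-- A subspace `ℋ ⊆ 𝒦_{K|T}` is Milnor-closed if for every nonzero `s ∈ ℋ` and every
`t ∈ 𝒦_{K|T}` with `{s,t} = 0` in `𝒦_2(K|T)`, one has `t ∈ ℋ`. -/
def MilnorClosed (T : Subgroup Kˣ) (H : Submodule ℚ (KQ K T)) : Prop :=
  ∀ s ∈ H, s ≠ 0 → ∀ t : KQ K T, KQtoMilnor K T s * KQtoMilnor K T t = 0 → t ∈ H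

/-- The projection `ℚ ⊗_ℤ Kˣ → 𝒦_{K|T}`. -/
noncomputable def KQproj (T : Subgroup Kˣ) : (ℚ ⊗[ℤ] Additive Kˣ) →ₗ[ℚ] KQ K T :=
  LinearMap.baseChange ℚ (subgroupToSubmodule K T).mkQ

lemma KQproj_surjective (T : Subgroup Kˣ) : Function.Surjective (KQproj K T) := by
  intro z
  induction z using TensorProduct.induction_on with
  | zero => exact ⟨0, map_zero _⟩
  | tmul a b =>
      obtain ⟨u, hu⟩ := Submodule.Quotient.mk_surjective (subgroupToSubmodule K T) b
      exact ⟨a ⊗ₜ u, by rw [KQproj, LinearMap.baseChange_tmul, Submodule.mkQ_apply, hu]⟩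
  | add x y hx hy =>
      obtain ⟨x', hx'⟩ := hx
      obtain ⟨y', hy'⟩ := hy
      exact ⟨x' + y', by rw [map_add, hx', hy']⟩

/-- The canonical pairing `𝒦_{K|T} × 𝒢_{K|T} → ℚ`.  It takes the correct value
`⟨s, f⟩` whenever `f` vanishes on `T` (in which case the value is independent of the
choice of preimage), and junk values otherwise. -/
noncomputable def gpair (T : Subgroup Kˣ) (f : GK K) (s : KQ K T) : ℚ :=
  (LinearMap.liftBaseChange ℚ f) (Function.surjInv (KQproj_surjective K T) s)

/-- The image of `𝒦_{L|k}` in `𝒦_{K|k}`, i.e. the subspace spanned by the classes of the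
elements of `Lˣ`. -/
noncomputable def subfieldSpan (k : Subfield K) (L : Subfield K) :
    Submodule ℚ (KQ K (subfieldUnits K k)) :=
  Submodule.span ℚ {s | ∃ x : Kˣ, (x : K) ∈ L ∧ s = symbQ K (subfieldUnits K k) x}

end KQ

section FieldTheory

variable (K : Type) [Field K]

/-- `k` is relatively algebraically closed in `K`. -/
def IsRelAlgClosed (k : Subfield K) : Prop := ∀ x : K, IsAlgebraic k x → x ∈ k

/-- The relative algebraic closure of a subfield `M` in `K` (the set of elements of `K`
algebraic over `M`, which is already a subfield). -/
def relAlgClosure (M : Subfield K) : Subfield K :=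
  Subfield.closure {x : K | IsAlgebraic M x}

/-- The transcendence degree `trdeg(L|k)` of an extension of subfields of `K`:
the supremum of the cardinalities of subsets of `L` that are algebraically independent
over `k`.  `trdeg K k ⊤` is `trdeg(K|k)`. -/
noncomputable def trdeg (k L : Subfield K) : Cardinal :=
  ⨆ s : {s : Set K // s ⊆ (L : Set K) ∧ AlgebraicIndependent k ((↑) : s → K)},
    Cardinal.mk s.1

/-- The perfect closure `k^i` of a subfield `k ⊆ K` inside a perfect closure
`iK : K → Ki` of `K` (with respect to the characteristic exponent `p`): the set of
elements with a `p`-power in `iK(k)` (already a subfield). -/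
def subPerfectClosure {Ki : Type} [Field Ki] (iK : K →+* Ki) (k : Subfield K) (p : ℕ) :
    Subfield Ki :=
  Subfield.closure {x : Ki | ∃ n : ℕ, ∃ a : K, a ∈ k ∧ x ^ p ^ n = iK a}

variable {K}

lemma subfield_units_map {L : Type} [Field L] (σ : K →+* L) (k : Subfield K)
    (l : Subfield L) (h : ∀ x ∈ k, σ x ∈ l) :
    ∀ x : Kˣ, x ∈ subfieldUnits K k → Units.map (σ : K →* L) x ∈ subfieldUnits L l :=
  fun x hx => h x hx

lemma mem_subPerfectClosure {Ki : Type} [Field Ki] (iK : K →+* Ki) (k : Subfield K)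
    (p : ℕ) : ∀ x ∈ k, iK x ∈ subPerfectClosure K iK k p :=
  fun x hx => Subfield.subset_closure ⟨0, x, hx, by simp⟩

lemma bot_units_map {L : Type} [Field L] (σ : K →+* L) (S : Subgroup Lˣ) :
    ∀ x : Kˣ, x ∈ (⊥ : Subgroup Kˣ) → Units.map (σ : K →* L) x ∈ S := by
  intro x hx
  rw [Subgroup.mem_bot] at hx
  subst hx
  rw [map_one]
  exact S.one_mem

end FieldTheory



section AuxBasic

variable {K : Type} [Field K]

/-- Evaluation of a functional at a unit. -/
def ev (f : GK K) (x : Kˣ) : ℚ := f (Additive.ofMul x)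

@[simp] lemma ev_one (f : GK K) : ev f 1 = 0 := by
  simp [ev, ofMul_one]

@[simp] lemma ev_mul (f : GK K) (x y : Kˣ) : ev f (x * y) = ev f x + ev f y := by
  simp [ev, ofMul_mul]

@[simp] lemma ev_inv (f : GK K) (x : Kˣ) : ev f x⁻¹ = - ev f x := by
  simp [ev, ofMul_inv]

@[simp] lemma ev_neg_one (f : GK K) : ev f (-1) = 0 := by
  have h : ev f ((-1) * (-1)) = ev f 1 := by norm_num
  rw [ev_mul, ev_one] at h
  linarith

@[simp] lemma ev_neg (f : GK K) (x : Kˣ) : ev f (-x) = ev f x := by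
  rw [← neg_one_mul x, ev_mul, ev_neg_one, zero_add]

lemma ev_pow (f : GK K) (x : Kˣ) (n : ℕ) : ev f (x ^ n) = n * ev f x := by
  induction n with
  | zero => simp
  | succ k ih => rw [pow_succ, ev_mul, ih]; push_cast; ring

lemma altPair_symm {f g : GK K} (h : AltPair f g) : AltPair g f := by
  intro x y hxy
  have := h x y hxy
  show g (Additive.ofMul x) * f (Additive.ofMul y) = g (Additive.ofMul y) * f (Additive.ofMul x)
  linarith [this]

lemma altPair_ev {f g : GK K} (h : AltPair f g) {x y : Kˣ} (hxy : (x : K) + (y : K) = 1) :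
    ev f x * ev g y = ev f y * ev g x := h x y hxy

lemma units_coe_ne_one {x : Kˣ} (h : x ≠ 1) : (x : K) ≠ 1 := by
  intro he; exact h (Units.ext he)

open Classical in
noncomputable def omx (x : Kˣ) : Kˣ :=
  if h : (1 : K) - (x : K) = 0 then 1 else Units.mk0 _ h

lemma omx_coe {x : Kˣ} (h : x ≠ 1) : ((omx x : Kˣ) : K) = 1 - (x : K) := by
  have h0 : (1 : K) - (x : K) ≠ 0 := by
    intro h0
    exact units_coe_ne_one h (sub_eq_zero.mp h0).symm
  rw [omx, dif_neg h0, Units.val_mk0]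

lemma omx_sum {x : Kˣ} (h : x ≠ 1) : (x : K) + ((omx x : Kˣ) : K) = 1 := by
  rw [omx_coe h]; ring

lemma omx_omx {x : Kˣ} (h : x ≠ 1) (h' : omx x ≠ 1) : omx (omx x) = x := by
  apply Units.ext
  rw [omx_coe h', omx_coe h]; ring

lemma mem_GKrel_iff {S : Subgroup Kˣ} {f : GK K} :
    f ∈ GKrel K S ↔ ∀ x ∈ S, f (Additive.ofMul x) = 0 := Iff.rfl

lemma mem_RCentralizer_iff {W : Submodule ℚ (GK K)} {f : GK K} :
    f ∈ RCentralizer K W ↔ ∀ g ∈ W, AltPair f g := Iff.rfl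

end AuxBasic

section FwdAux

variable {K : Type} [Field K]

lemma val_unit_ne_zero (A : ValuationSubring K) (x : Kˣ) : A.valuation (x : K) ≠ 0 := by
  simp [Valuation.ne_zero_iff]

lemma mem_unitGroup_of (A : ValuationSubring K) {x : Kˣ} (h1 : (x : K) ∈ A)
    (h2 : ((x : K))⁻¹ ∈ A) : x ∈ A.unitGroup := by
  rw [ValuationSubring.mem_unitGroup_iff]
  have l1 : A.valuation (x : K) ≤ 1 := (A.valuation_le_one_iff _).mpr h1
  have l2 : A.valuation ((x : K))⁻¹ ≤ 1 := (A.valuation_le_one_iff _).mpr h2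
  rw [map_inv₀] at l2
  refine le_antisymm l1 ?_
  calc (1 : _) = A.valuation (x : K) * (A.valuation (x : K))⁻¹ := by
        rw [mul_inv_cancel₀ (val_unit_ne_zero A x)]
    _ ≤ A.valuation (x : K) * 1 := mul_le_mul_right l2 _
    _ = A.valuation (x : K) := mul_one _

lemma val_lt_one_of (A : ValuationSubring K) {x : K} (h1 : x ∈ A)
    (h2 : x⁻¹ ∉ A) : A.valuation x < 1 := by
  rcases lt_or_eq_of_le ((A.valuation_le_one_iff _).mpr h1) with h | h
  · exact h
  · exfalso
    apply h2
    rw [← A.valuation_le_one_iff, map_inv₀, h, inv_one]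

lemma inv_not_mem_of_val_lt_one (A : ValuationSubring K) {x : Kˣ}
    (h : A.valuation (x : K) < 1) : ((x : K))⁻¹ ∉ A := by
  intro hmem
  have l2 : A.valuation ((x : K))⁻¹ ≤ 1 := (A.valuation_le_one_iff _).mpr hmem
  rw [map_inv₀] at l2
  have : (1 : _) ≤ A.valuation (x : K) := by
    calc (1 : _) = A.valuation (x : K) * (A.valuation (x : K))⁻¹ := by
          rw [mul_inv_cancel₀ (val_unit_ne_zero A x)]
      _ ≤ A.valuation (x : K) * 1 := mul_le_mul_right l2 _
      _ = A.valuation (x : K) := mul_one _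
  exact absurd h (not_lt.mpr this)

lemma val_one_sub_of_lt (A : ValuationSubring K) {z : K}
    (h : A.valuation z < 1) : A.valuation (1 - z) = 1 := by
  have := A.valuation.map_one_add_of_lt (x := -z) (by rwa [Valuation.map_neg])
  rwa [← sub_eq_add_neg] at this

end FwdAux


section APLemma

variable {K : Type} [Field K]

/-- Any `f` killing the principal units and `g` killing the units of a valuation subring
form an alternating pair. -/
lemma altPair_of_val (A : ValuationSubring K) (f g : GK K)
    (hg : ∀ x : Kˣ, x ∈ A.unitGroup → ev g x = 0)
    (hf : ∀ x : Kˣ, x ∈ A.principalUnitGroup → ev f x = 0) :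
    AltPair f g := by
  have key : ∀ x y : Kˣ, (x : K) + (y : K) = 1 → A.valuation (x : K) < 1 →
      ev f x * ev g y = ev f y * ev g x := by
    intro x y hxy hx
    have hy1 : A.valuation ((y : K) - 1) < 1 := by
      have hyx : (y : K) - 1 = -(x : K) := by linear_combination hxy
      rw [hyx, Valuation.map_neg]; exact hx
    have hyP : y ∈ A.principalUnitGroup := (A.mem_principalUnitGroup_iff y).mpr hy1
    have hyU : y ∈ A.unitGroup := A.principal_units_le_units hyP
    rw [hf y hyP, hg y hyU]; ring
  have key2 : ∀ x y : Kˣ, (x : K) + (y : K) = 1 → 1 < A.valuation (x : K) →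
      (ev f y = ev f x ∧ ev g y = ev g x) := by
    intro x y hxy hx
    have hxne : (x : K)⁻¹ ≠ 1 := by
      intro h
      have : (x : K) = 1 := by
        field_simp at h
        simp [h]
      rw [this] at hx; simp at hx
    have hxinvne : x⁻¹ ≠ 1 := by
      intro h; apply hxne
      rw [← Units.val_inv_eq_inv_val, h, Units.val_one]
    have hvinv : A.valuation ((x : K))⁻¹ < 1 := by
      have h0 : A.valuation (x : K) ≠ 0 := val_unit_ne_zero A x
      rw [map_inv₀]
      exact inv_lt_one_of_one_lt₀ hx
    have hw1 : A.valuation (((omx x⁻¹ : Kˣ) : K) - 1) < 1 := by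
      rw [omx_coe hxinvne]
      have : (1 : K) - ((x⁻¹ : Kˣ) : K) - 1 = -((x : K))⁻¹ := by
        rw [Units.val_inv_eq_inv_val]; ring
      rw [this, Valuation.map_neg]
      exact hvinv
    have hwP : omx x⁻¹ ∈ A.principalUnitGroup :=
      (A.mem_principalUnitGroup_iff _).mpr hw1
    have hwU : omx x⁻¹ ∈ A.unitGroup := A.principal_units_le_units hwP
    have hyeq : y = -x * omx x⁻¹ := by
      apply Units.ext
      rw [Units.val_mul, Units.val_neg, omx_coe hxinvne, Units.val_inv_eq_inv_val]
      have hx0 : (x : K) ≠ 0 := Units.ne_zero x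
      have hyval : (y : K) = 1 - (x : K) := by linear_combination hxy
      rw [hyval]
      field_simp
      ring
    constructor
    · rw [hyeq, ev_mul, ev_neg, hf _ hwP, add_zero]
    · rw [hyeq, ev_mul, ev_neg, hg _ hwU, add_zero]
  intro x y hxy
  show ev f x * ev g y = ev f y * ev g x
  rcases lt_trichotomy (A.valuation (x : K)) 1 with hx | hx | hx
  · exact key x y hxy hx
  · rcases lt_trichotomy (A.valuation (y : K)) 1 with hy | hy | hy
    · have := key y x (by linear_combination hxy) hy
      linarith
    · have hxU : x ∈ A.unitGroup := (A.mem_unitGroup_iff x).mpr hx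
      have hyU : y ∈ A.unitGroup := (A.mem_unitGroup_iff y).mpr hy
      rw [hg x hxU, hg y hyU]; ring
    · obtain ⟨h1, h2⟩ := key2 y x (by linear_combination hxy) hy
      rw [h1, h2]
  · obtain ⟨h1, h2⟩ := key2 x y hxy hx
    rw [h1, h2]

end APLemma

section FwdCore

variable {K : Type} [Field K]

lemma fwd_induct (A : ValuationSubring K) (g : GK K)
    (hgU : ∀ t : Kˣ, t ∈ A.unitGroup → ev g t = 0)
    (a : Kˣ) (hga : ev g a = 0)
    (hsmall : ∀ s : Kˣ, (s : K) ∈ A → ((s : K))⁻¹ ∉ A → ((a : K) / (s : K)) ∈ A →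
      ((s : K) / (a : K)) ∉ A → ev g s = 0) :
    ∀ k : ℕ, ∀ y : Kˣ, (y : K) ∈ A → ((a : K) ^ k / (y : K)) ∈ A → ev g y = 0 := by
  intro k
  induction k with
  | zero =>
    intro y hy hy'
    simp only [pow_zero] at hy'
    rw [one_div] at hy'
    exact hgU y (mem_unitGroup_of A hy hy')
  | succ k ih =>
    intro y hy hy'
    by_cases hyi : ((y : K))⁻¹ ∈ A
    · exact hgU y (mem_unitGroup_of A hy hyi)
    by_cases hay : ((a : K) / (y : K)) ∈ A
    · by_cases hya : ((y : K) / (a : K)) ∈ A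
      · have ht : (((a⁻¹ * y : Kˣ) : K)) ∈ A := by
          rw [Units.val_mul, Units.val_inv_eq_inv_val]
          rwa [div_eq_mul_inv, mul_comm] at hya
        have ht' : (((a⁻¹ * y : Kˣ) : K))⁻¹ ∈ A := by
          rw [Units.val_mul, Units.val_inv_eq_inv_val, mul_inv, inv_inv]
          rwa [div_eq_mul_inv] at hay
        have := hgU _ (mem_unitGroup_of A ht ht')
        have hyat : y = a * (a⁻¹ * y) := by group
        rw [hyat, ev_mul, hga, this]; ring
      · exact hsmall y hy hyi hay hya
    · have hya : ((y : K) / (a : K)) ∈ A := by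
        rcases A.mem_or_inv_mem ((a : K) / (y : K)) with h | h
        · exact absurd h hay
        · rwa [inv_div] at h
      have ht : (((a⁻¹ * y : Kˣ) : K)) ∈ A := by
        rw [Units.val_mul, Units.val_inv_eq_inv_val]
        rwa [div_eq_mul_inv, mul_comm] at hya
      have ht' : ((a : K) ^ k / ((a⁻¹ * y : Kˣ) : K)) ∈ A := by
        have heq : (a : K) ^ k / ((a⁻¹ * y : Kˣ) : K) = (a : K) ^ (k + 1) / (y : K) := by
          rw [Units.val_mul, Units.val_inv_eq_inv_val]
          have ha0 : (a : K) ≠ 0 := Units.ne_zero a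
          have hy0 : (y : K) ≠ 0 := Units.ne_zero y
          field_simp
          ring
        rw [heq]; exact hy'
      have := ih (a⁻¹ * y) ht ht'
      have hyat : y = a * (a⁻¹ * y) := by group
      rw [hyat, ev_mul, hga, this]; ring

/-- The overring `A[1/a]`-saturation of a valuation subring. -/
def expandRing (A : ValuationSubring K) (a : K) (ha : a ∈ A) : ValuationSubring K where
  carrier := {x : K | ∃ n : ℕ, x * a ^ n ∈ A}
  zero_mem' := ⟨0, by simpa using A.zero_mem⟩
  one_mem' := ⟨0, by simpa using A.one_mem⟩
  add_mem' := by
    rintro x y ⟨n, hx⟩ ⟨m, hy⟩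
    refine ⟨n + m, ?_⟩
    have heq : (x + y) * a ^ (n + m) = x * a ^ n * a ^ m + y * a ^ m * a ^ n := by ring
    rw [heq]
    exact add_mem (mul_mem hx (pow_mem ha m)) (mul_mem hy (pow_mem ha n))
  mul_mem' := by
    rintro x y ⟨n, hx⟩ ⟨m, hy⟩
    refine ⟨n + m, ?_⟩
    have heq : x * y * a ^ (n + m) = (x * a ^ n) * (y * a ^ m) := by ring
    rw [heq]
    exact mul_mem hx hy
  neg_mem' := by
    rintro x ⟨n, hx⟩
    exact ⟨n, by rw [neg_mul]; exact neg_mem hx⟩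
  mem_or_inv_mem' := by
    intro x
    rcases A.mem_or_inv_mem x with h | h
    · exact Or.inl ⟨0, by simpa using h⟩
    · exact Or.inr ⟨0, by simpa using h⟩

end FwdCore


section FwdMain

variable {K : Type} [Field K]

lemma mem_Ival_iff {A : ValuationSubring K} {f : GK K} :
    f ∈ Ival K A ↔ ∀ x ∈ A.unitGroup, f (Additive.ofMul x) = 0 := Iff.rfl

lemma mem_Dval_iff {A : ValuationSubring K} {f : GK K} :
    f ∈ Dval K A ↔ ∀ x ∈ A.principalUnitGroup, f (Additive.ofMul x) = 0 := Iff.rfl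

lemma mem_expandRing_iff {A : ValuationSubring K} {a : K} {ha : a ∈ A} {x : K} :
    x ∈ expandRing A a ha ↔ ∃ n : ℕ, x * a ^ n ∈ A := Iff.rfl

lemma forward_sub (T : Subgroup Kˣ) (A : ValuationSubring K)
    (hmin : ∀ B : ValuationSubring K, Ival K A ⊓ GKrel K T ≤ Ival K B → B ≤ A)
    (f : GK K) (hfC : ∀ g ∈ Ival K A ⊓ GKrel K T, AltPair f g) :
    f ∈ Dval K A := by
  rw [mem_Dval_iff]
  intro u hu
  show ev f u = 0
  by_cases hu1 : u = 1
  · rw [hu1]; exact ev_one f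
  -- the element a = 1 - u of the maximal ideal
  set a : Kˣ := omx u with ha_def
  have hacoe : ((a : Kˣ) : K) = 1 - (u : K) := omx_coe hu1
  have hva : A.valuation (a : K) < 1 := by
    have h1 : (a : K) = -((u : K) - 1) := by rw [hacoe]; ring
    rw [h1, Valuation.map_neg]
    exact (A.mem_principalUnitGroup_iff u).mp hu
  have haA : (a : K) ∈ A := A.mem_of_valuation_le_one _ hva.le
  have hainv : ((a : K))⁻¹ ∉ A := inv_not_mem_of_val_lt_one A hva
  have hsum : (a : K) + (u : K) = 1 := by rw [hacoe]; ring
  have huU : u ∈ A.unitGroup := A.principal_units_le_units hu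
  -- the basic relation
  have hrel : ∀ g ∈ Ival K A ⊓ GKrel K T, ev g a ≠ 0 → ev f u = 0 := by
    intro g hg hga
    have h1 := altPair_ev (hfC g hg) hsum
    have h2 : ev g u = 0 := (Submodule.mem_inf.mp hg).1 u huU
    rw [h2, mul_zero] at h1
    rcases mul_eq_zero.mp h1.symm with h | h
    · exact h
    · exact absurd h hga
  by_cases hc1 : ∃ g ∈ Ival K A ⊓ GKrel K T, ev g a ≠ 0
  · obtain ⟨g, hg, hga⟩ := hc1
    exact hrel g hg hga
  push_neg at hc1
  by_cases hc2 : ∃ s : Kˣ, ((s : K) ∈ A ∧ ((s : K))⁻¹ ∉ A ∧ ((a : K) / (s : K)) ∈ A ∧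
      ((s : K) / (a : K)) ∉ A) ∧ ∃ g ∈ Ival K A ⊓ GKrel K T, ev g s ≠ 0
  · obtain ⟨s, ⟨hsA, hsinv, hasA, hsaA⟩, g, hgZ, hgs⟩ := hc2
    have hs1 : s ≠ 1 := by
      intro h
      apply hsinv
      rw [h, Units.val_one, inv_one]
      exact A.one_mem
    have hvs : A.valuation (s : K) < 1 := val_lt_one_of A hsA hsinv
    have hvas : A.valuation ((a : K) / (s : K)) < 1 := by
      apply val_lt_one_of A hasA
      rwa [inv_div]
    have h1s : A.valuation (1 - (s : K)) = 1 := val_one_sub_of_lt A hvs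
    have hasne : (a : K) - (s : K) ≠ 0 := by
      intro h
      apply hsaA
      rw [(sub_eq_zero.mp h).symm, div_self (Units.ne_zero a)]
      exact A.one_mem
    have hs0 : (s : K) ≠ 0 := Units.ne_zero s
    have hvams : A.valuation ((a : K) - (s : K)) = A.valuation (s : K) := by
      have heq : (a : K) - (s : K) = (s : K) * ((a : K) / (s : K) - 1) := by
        field_simp
      have h2 : A.valuation ((a : K) / (s : K) - 1) = 1 := by
        have h3 : (a : K) / (s : K) - 1 = -(1 - (a : K) / (s : K)) := by ring
        rw [h3, Valuation.map_neg]
        exact val_one_sub_of_lt A hvas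
      rw [heq, Valuation.map_mul, h2, mul_one]
    have h1sne : (1 : K) - (s : K) ≠ 0 := by
      intro h
      rw [h] at h1s
      simp at h1s
    set y0 : K := ((a : K) - (s : K)) / (1 - (s : K)) with hy0_def
    have hy0ne : y0 ≠ 0 := div_ne_zero hasne h1sne
    set y : Kˣ := Units.mk0 y0 hy0ne with hy_def
    have hycoe : (y : K) = y0 := rfl
    have hvy : A.valuation (y : K) < 1 := by
      rw [hycoe, hy0_def, map_div₀, hvams, h1s, div_one]
      exact hvs
    have hy1 : y ≠ 1 := by
      intro h
      rw [h, Units.val_one] at hvy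
      simp at hvy
    -- w = y / s is a unit of A
    have hwU : s⁻¹ * y ∈ A.unitGroup := by
      rw [ValuationSubring.mem_unitGroup_iff, Units.val_mul, Valuation.map_mul,
        Units.val_inv_eq_inv_val, map_inv₀, hycoe, hy0_def, map_div₀, hvams, h1s, div_one]
      exact inv_mul_cancel₀ (by simp [Valuation.ne_zero_iff, hs0])
    have hgy : ev g y = ev g s := by
      have hyw : y = s * (s⁻¹ * y) := by group
      have h0 : ev g (s⁻¹ * y) = 0 := (Submodule.mem_inf.mp hgZ).1 _ hwU
      rw [hyw, ev_mul, h0, add_zero]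
      
    -- f vanishes on omx s and omx y
    have hkill : ∀ t : Kˣ, t ≠ 1 → A.valuation (1 - (t : K)) = 1 → ev g t ≠ 0 →
        ev f (omx t) = 0 := by
      intro t ht1 hvt hgt
      have hrel2 := altPair_ev (hfC g hgZ) (omx_sum ht1)
      have h2 : ev g (omx t) = 0 := by
        apply (Submodule.mem_inf.mp hgZ).1
        rw [ValuationSubring.mem_unitGroup_iff, omx_coe ht1]
        exact hvt
      rw [h2, mul_zero] at hrel2
      rcases mul_eq_zero.mp hrel2.symm with h | h
      · exact h
      · exact absurd h hgt
    have hfs : ev f (omx s) = 0 := hkill s hs1 h1s hgs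
    have hfy : ev f (omx y) = 0 := by
      apply hkill y hy1 (val_one_sub_of_lt A (by rw [hycoe]; exact hvy))
      rw [hgy]; exact hgs
    -- u = omx s * omx y
    have hu_eq : u = omx s * omx y := by
      apply Units.ext
      rw [Units.val_mul, omx_coe hs1, omx_coe hy1, hycoe, hy0_def]
      have hucoe : (u : K) = 1 - (a : K) := by rw [hacoe]; ring
      rw [hucoe]
      field_simp
      ring
    rw [hu_eq, ev_mul, hfs, hfy, add_zero]
  · push_neg at hc2
    set B : ValuationSubring K := expandRing A (a : K) haA with hB_def
    have hIB : Ival K A ⊓ GKrel K T ≤ Ival K B := by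
      intro g hg
      rw [mem_Ival_iff]
      intro x hx
      show ev g x = 0
      rw [ValuationSubring.mem_unitGroup_iff] at hx
      have hxB : (x : K) ∈ B := B.mem_of_valuation_le_one _ hx.le
      have hxB' : ((x : K))⁻¹ ∈ B := by
        apply B.mem_of_valuation_le_one
        rw [map_inv₀, hx, inv_one]
      obtain ⟨n, hxn⟩ := hxB
      obtain ⟨m, hxm⟩ := hxB'
      have hgU : ∀ t : Kˣ, t ∈ A.unitGroup → ev g t = 0 := (Submodule.mem_inf.mp hg).1
      have hga : ev g a = 0 := hc1 g hg
      have hsm : ∀ s : Kˣ, (s : K) ∈ A → ((s : K))⁻¹ ∉ A → ((a : K) / (s : K)) ∈ A →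
          ((s : K) / (a : K)) ∉ A → ev g s = 0 := fun s h1 h2 h3 h4 =>
        hc2 s ⟨h1, h2, h3, h4⟩ g hg
      set z : Kˣ := x * a ^ n with hz_def
      have hz1 : (z : K) ∈ A := by
        rw [hz_def, Units.val_mul, Units.val_pow_eq_pow_val]
        exact hxn
      have hz2 : ((a : K) ^ (n + m) / (z : K)) ∈ A := by
        have heq : (a : K) ^ (n + m) / (z : K) = ((x : K))⁻¹ * (a : K) ^ m := by
          rw [hz_def, Units.val_mul, Units.val_pow_eq_pow_val]
          have hx0 : (x : K) ≠ 0 := Units.ne_zero x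
          have ha0 : (a : K) ≠ 0 := Units.ne_zero a
          have hap0 : (a : K) ^ n ≠ 0 := pow_ne_zero n ha0
          field_simp
          ring
        rw [heq]
        exact hxm
      have hz0 := fwd_induct A g hgU a hga hsm (n + m) z hz1 hz2
      rw [hz_def, ev_mul, ev_pow, hga, mul_zero, add_zero] at hz0
      exact hz0
    have hBA := hmin B hIB
    have haB : ((a : K))⁻¹ ∈ B := by
      refine ⟨1, ?_⟩
      rw [pow_one, inv_mul_cancel₀ (Units.ne_zero a)]
      exact A.one_mem
    exact absurd (hBA haB) hainv

end FwdMain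



section BwdBasics

variable {K : Type} [Field K]

/-- `x` is killed by all functionals in `W`. -/
def Kills (W : Submodule ℚ (GK K)) (x : Kˣ) : Prop := ∀ g ∈ W, ev g x = 0

lemma kills_one (W : Submodule ℚ (GK K)) : Kills W (1 : Kˣ) := fun g _ => ev_one g

lemma kills_neg_one (W : Submodule ℚ (GK K)) : Kills W (-1 : Kˣ) := fun g _ => ev_neg_one g

lemma kills_mul {W : Submodule ℚ (GK K)} {x y : Kˣ} (hx : Kills W x) (hy : Kills W y) :
    Kills W (x * y) := fun g hg => by rw [ev_mul, hx g hg, hy g hg, add_zero]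

lemma kills_inv {W : Submodule ℚ (GK K)} {x : Kˣ} (hx : Kills W x) : Kills W x⁻¹ :=
  fun g hg => by rw [ev_inv, hx g hg, neg_zero]

lemma kills_of_inv {W : Submodule ℚ (GK K)} {x : Kˣ} (hx : Kills W x⁻¹) : Kills W x :=
  fun g hg => by have := hx g hg; rw [ev_inv] at this; linarith

lemma kills_neg {W : Submodule ℚ (GK K)} {x : Kˣ} (hx : Kills W x) : Kills W (-x) :=
  fun g hg => by rw [ev_neg]; exact hx g hg

lemma kills_of_le {Z W : Submodule ℚ (GK K)} (h : Z ≤ W) {x : Kˣ} (hx : Kills W x) :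
    Kills Z x := fun g hg => hx g (h hg)

lemma not_kills {W : Submodule ℚ (GK K)} {x : Kˣ} (hx : ¬Kills W x) :
    ∃ g ∈ W, ev g x ≠ 0 := by
  by_contra h
  push_neg at h
  exact hx h

lemma not_kills_ne_one {W : Submodule ℚ (GK K)} {x : Kˣ} (hx : ¬Kills W x) : x ≠ 1 := by
  intro h; rw [h] at hx; exact hx (kills_one W)

lemma not_kills_mul_left {W : Submodule ℚ (GK K)} {h x : Kˣ} (hh : Kills W h)
    (hx : ¬Kills W x) : ¬Kills W (h * x) := by
  intro hk
  apply hx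
  intro g hg
  have := hk g hg
  rw [ev_mul, hh g hg, zero_add] at this
  exact this


lemma not_kills_mul_right {W : Submodule ℚ (GK K)} {x h : Kˣ} (hx : ¬Kills W x)
    (hh : Kills W h) : ¬Kills W (x * h) := by
  intro hk
  apply hx
  intro g hg
  have := hk g hg
  rw [ev_mul, hh g hg, add_zero] at this
  exact this

lemma omx_ne_one {x : Kˣ} (h : x ≠ 1) : omx x ≠ 1 := by
  intro he
  have h1 : ((omx x : Kˣ) : K) = 1 - (x : K) := omx_coe h
  rw [he, Units.val_one] at h1
  exact Units.ne_zero x (sub_eq_self.mp h1.symm)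

lemma omx_inv_eq {x : Kˣ} (h : x ≠ 1) : omx x⁻¹ = -x⁻¹ * omx x := by
  have hxinv : x⁻¹ ≠ 1 := by
    intro he; exact h (by rw [← inv_inv x, he, inv_one])
  apply Units.ext
  rw [omx_coe hxinv, Units.val_mul, Units.val_neg, Units.val_inv_eq_inv_val, omx_coe h]
  have hx0 : (x : K) ≠ 0 := Units.ne_zero x
  field_simp
  ring

/-- The auxiliary element `z = x(b-1)/(1-x)` in the decomposition
`1 - xb = (1-x)(1-z)`. -/
noncomputable def zOf (x b : Kˣ) : Kˣ := x * (-(omx b)) * (omx x)⁻¹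

lemma zOf_coe {x b : Kˣ} (hx : x ≠ 1) (hb : b ≠ 1) :
    ((zOf x b : Kˣ) : K) = (x : K) * ((b : K) - 1) / (1 - (x : K)) := by
  rw [zOf, Units.val_mul, Units.val_mul, Units.val_neg, Units.val_inv_eq_inv_val,
    omx_coe hx, omx_coe hb]
  ring

lemma zOf_ne_one {x b : Kˣ} (hx : x ≠ 1) (hb : b ≠ 1) (hxb : x * b ≠ 1) :
    zOf x b ≠ 1 := by
  intro he
  have h1 : ((zOf x b : Kˣ) : K) = 1 := by rw [he, Units.val_one]
  rw [zOf_coe hx hb] at h1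
  have hx1 : (1 : K) - (x : K) ≠ 0 := by
    intro h0; exact units_coe_ne_one hx (sub_eq_zero.mp h0).symm
  apply units_coe_ne_one hxb
  rw [Units.val_mul]
  field_simp at h1
  linear_combination h1

lemma omx_mul_eq {x b : Kˣ} (hx : x ≠ 1) (hb : b ≠ 1) (hxb : x * b ≠ 1) :
    omx (x * b) = omx x * omx (zOf x b) := by
  apply Units.ext
  simp only [Units.val_mul]
  rw [omx_coe hxb, omx_coe hx, omx_coe (zOf_ne_one hx hb hxb), zOf_coe hx hb,
    Units.val_mul]
  have hx1 : (1 : K) - (x : K) ≠ 0 := by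
    intro h0; exact units_coe_ne_one hx (sub_eq_zero.mp h0).symm
  field_simp
  ring

lemma ev_zOf (f : GK K) (x b : Kˣ) :
    ev f (zOf x b) = ev f x + ev f (omx b) - ev f (omx x) := by
  rw [zOf, ev_mul, ev_mul, ev_neg, ev_inv]
  ring

end BwdBasics

section BwdCtxSec

variable {K : Type} [Field K]

/-- The context for the backward direction: a pair of subspaces `Z ≤ D` pairing
alternately, the coefficient function `c`, and a non-degenerate pair `(u, 1-u)`. -/
structure BwdCtx (K : Type) [Field K] where
  Z : Submodule ℚ (GK K)
  D : Submodule ℚ (GK K)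
  c : Kˣ → ℚ
  hZD : Z ≤ D
  hAP : ∀ g ∈ Z, ∀ f ∈ D, AltPair g f
  hc : ∀ x : Kˣ, ¬Kills Z x → ∀ f ∈ D, ev f (omx x) = c x * ev f x
  u : Kˣ
  hune : u ≠ 1
  huZ : Kills Z u
  huoZ : Kills Z (omx u)
  hindep : ∀ a b : ℚ, (∀ f ∈ D, a * ev f u + b * ev f (omx u) = 0) → a = 0 ∧ b = 0

namespace BwdCtx

variable (C : BwdCtx K)

lemma hcZ {x : Kˣ} (hx : ¬Kills C.Z x) : ∀ g ∈ C.Z, ev g (omx x) = C.c x * ev g x :=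
  fun g hg => C.hc x hx g (C.hZD hg)

lemma not_killsD {x : Kˣ} (hx : ¬Kills C.Z x) : ¬Kills C.D x :=
  fun h => hx (kills_of_le C.hZD h)

lemma witD {x : Kˣ} (hx : ¬Kills C.Z x) : ∃ f ∈ C.D, ev f x ≠ 0 :=
  not_kills (C.not_killsD hx)

lemma c_zero_iff {x : Kˣ} (hx : ¬Kills C.Z x) : C.c x = 0 ↔ Kills C.D (omx x) := by
  constructor
  · intro h0 f hf
    rw [C.hc x hx f hf, h0, zero_mul]
  · intro hk
    obtain ⟨f, hf, hfx⟩ := C.witD hx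
    have := C.hc x hx f hf
    rw [hk f hf] at this
    exact (mul_eq_zero.mp this.symm).resolve_right hfx

lemma c_zero_iffZ {x : Kˣ} (hx : ¬Kills C.Z x) : C.c x = 0 ↔ Kills C.Z (omx x) := by
  constructor
  · intro h0 g hg
    rw [C.hcZ hx g hg, h0, zero_mul]
  · intro hk
    obtain ⟨g, hg, hgx⟩ := not_kills hx
    have := C.hcZ hx g hg
    rw [hk g hg] at this
    exact (mul_eq_zero.mp this.symm).resolve_right hgx

lemma not_kills_inv {W : Submodule ℚ (GK K)} {x : Kˣ} (hx : ¬Kills W x) :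
    ¬Kills W x⁻¹ := fun h => hx (kills_of_inv h)

lemma c_inv {x : Kˣ} (hx : ¬Kills C.Z x) : C.c x⁻¹ = 1 - C.c x := by
  have hx1 : x ≠ 1 := not_kills_ne_one hx
  have hxi : ¬Kills C.Z x⁻¹ := not_kills_inv hx
  obtain ⟨f, hf, hfx⟩ := C.witD hx
  have h1 := C.hc x⁻¹ hxi f hf
  rw [omx_inv_eq hx1] at h1
  simp only [ev_mul, ev_neg, ev_inv] at h1
  rw [C.hc x hx f hf] at h1
  have h2 : (C.c x - 1 + C.c x⁻¹) * ev f x = 0 := by linear_combination h1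
  rcases mul_eq_zero.mp h2 with h | h
  · linarith
  · exact absurd h hfx

end BwdCtx

end BwdCtxSec


section BwdL1

variable {K : Type} [Field K] (C : BwdCtx K)

namespace BwdCtx

/-- Key rigidity lemma: the coefficient `c x` is always `0` or `1`. -/
lemma L1 {x : Kˣ} (hx : ¬Kills C.Z x) : C.c x = 0 ∨ C.c x = 1 := by
  by_cases hcx1 : C.c x = 1
  · exact Or.inr hcx1
  left
  obtain ⟨g, hgZ, hgx⟩ := not_kills hx
  have hx1 : x ≠ 1 := not_kills_ne_one hx
  have hxu : ¬Kills C.Z (x * C.u) := not_kills_mul_right hx C.huZ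
  have hxu1 : x * C.u ≠ 1 := not_kills_ne_one hxu
  set z : Kˣ := zOf x C.u with hz_def
  have hz1 : z ≠ 1 := zOf_ne_one hx1 C.hune hxu1
  have hgz : ev g z = (1 - C.c x) * ev g x := by
    rw [hz_def, ev_zOf, C.huoZ g hgZ, C.hcZ hx g hgZ]; ring
  have hzZ : ¬Kills C.Z z := by
    intro hk
    have := hk g hgZ
    rw [hgz] at this
    rcases mul_eq_zero.mp this with h | h
    · exact hcx1 (by linarith)
    · exact hgx h
  -- the master equation, for every f ∈ D
  have master : ∀ f ∈ C.D, C.c (x * C.u) * (ev f x + ev f C.u) =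
      C.c x * ev f x + C.c z * (ev f x + ev f (omx C.u) - C.c x * ev f x) := by
    intro f hf
    have eq1 := C.hc (x * C.u) hxu f hf
    rw [ev_mul] at eq1
    have eq2 : ev f (omx (x * C.u)) = C.c x * ev f x + C.c z * ev f z := by
      rw [omx_mul_eq hx1 C.hune hxu1, ev_mul, C.hc x hx f hf, C.hc z hzZ f hf]
    rw [eq1] at eq2
    rw [eq2, hz_def, ev_zOf, C.hc x hx f hf]
  -- scalar consequence via g
  have hscal : C.c (x * C.u) = C.c x + C.c z * (1 - C.c x) := by
    have := master g (C.hZD hgZ)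
    rw [C.huZ g hgZ, C.huoZ g hgZ] at this
    have h2 : (C.c (x * C.u) - (C.c x + C.c z * (1 - C.c x))) * ev g x = 0 := by
      linear_combination this
    rcases mul_eq_zero.mp h2 with h | h
    · linarith
    · exact absurd h hgx
  -- vector consequence
  have hvec : ∀ f ∈ C.D, C.c (x * C.u) * ev f C.u + (-(C.c z)) * ev f (omx C.u) = 0 := by
    intro f hf
    have h3 := master f hf
    rw [hscal] at h3
    rw [hscal]
    linear_combination h3
  obtain ⟨h1, h2⟩ := C.hindep _ _ hvec
  have : C.c z = 0 := by linarith
  rw [h1, this] at hscal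
  linarith

end BwdCtx

end BwdL1


section BwdMM

variable {K : Type} [Field K]

namespace BwdCtx

variable (C : BwdCtx K)

/-- `x` has "positive value" outside the subgroup killed by `Z`. -/
def MM (x : Kˣ) : Prop := ¬Kills C.Z x ∧ C.c x = 0

variable {C}

lemma MM.ne_one {x : Kˣ} (h : C.MM x) : x ≠ 1 := not_kills_ne_one h.1

lemma MM.ne_neg_one {x : Kˣ} (h : C.MM x) : x ≠ -1 :=
  fun he => h.1 (he ▸ kills_neg_one C.Z)

lemma MM.killsD_omx {x : Kˣ} (h : C.MM x) : Kills C.D (omx x) :=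
  (C.c_zero_iff h.1).mp h.2

lemma MM.killsZ_omx {x : Kˣ} (h : C.MM x) : Kills C.Z (omx x) :=
  (C.c_zero_iffZ h.1).mp h.2

lemma MM.not_inv {x : Kˣ} (h : C.MM x) : ¬C.MM x⁻¹ := by
  intro h2
  have := C.c_inv h.1
  rw [h.2, h2.2] at this
  norm_num at this

lemma MM_of_c_one {x : Kˣ} (hx : ¬Kills C.Z x) (h1 : C.c x = 1) : C.MM x⁻¹ :=
  ⟨not_kills_inv hx, by rw [C.c_inv hx, h1, sub_self]⟩

lemma MM_of_killsZ_omx {x : Kˣ} (hx : ¬Kills C.Z x) (h : Kills C.Z (omx x)) : C.MM x :=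
  ⟨hx, (C.c_zero_iffZ hx).mpr h⟩

lemma trichotomy (x : Kˣ) : Kills C.Z x ∨ C.MM x ∨ C.MM x⁻¹ := by
  by_cases hx : Kills C.Z x
  · exact Or.inl hx
  rcases C.L1 hx with h | h
  · exact Or.inr (Or.inl ⟨hx, h⟩)
  · exact Or.inr (Or.inr (MM_of_c_one hx h))

lemma not_kills_sq {x : Kˣ} (hx : ¬Kills C.Z x) : ¬Kills C.Z (x * x) := by
  obtain ⟨g, hg, hgx⟩ := not_kills hx
  intro hk
  have := hk g hg
  rw [ev_mul] at this
  apply hgx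
  linarith

/-- Closure of `MM` under multiplication, when the product stays outside the kernel. -/
lemma SL {x y : Kˣ} (hx : C.MM x) (hy : C.MM y) (hxy : ¬Kills C.Z (x * y)) :
    C.MM (x * y) := by
  refine ⟨hxy, ?_⟩
  have hx1 : x ≠ 1 := hx.ne_one
  have hy1 : y ≠ 1 := hy.ne_one
  have hxy1 : x * y ≠ 1 := not_kills_ne_one hxy
  set z : Kˣ := zOf x y with hz_def
  have evz : ∀ f ∈ C.D, ev f z = ev f x := by
    intro f hf
    rw [hz_def, ev_zOf, hy.killsD_omx f hf, hx.killsD_omx f hf]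
    ring
  obtain ⟨g, hg, hgx⟩ := not_kills hx.1
  have hzZ : ¬Kills C.Z z := by
    intro hk
    apply hgx
    rw [← evz g (C.hZD hg)]
    exact hk g hg
  have master : ∀ f ∈ C.D, C.c (x * y) * (ev f x + ev f y) = C.c z * ev f x := by
    intro f hf
    have eq1 := C.hc (x * y) hxy f hf
    rw [ev_mul] at eq1
    rw [← eq1, omx_mul_eq hx1 hy1 hxy1, ev_mul, hx.killsD_omx f hf, zero_add,
      C.hc z hzZ f hf, evz f hf]
  by_contra hc0
  have hc1 : C.c (x * y) = 1 := (C.L1 hxy).resolve_left hc0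
  rcases C.L1 hzZ with hz0 | hz1
  · -- c z = 0 : then x*y is killed by Z, contradiction
    apply hxy
    intro g' hg'
    have := master g' (C.hZD hg')
    rw [hc1, hz0, one_mul, zero_mul] at this
    rw [ev_mul]
    linarith
  · -- c z = 1 : then y is killed by D, contradiction
    apply C.not_killsD hy.1
    intro f hf
    have := master f hf
    rw [hc1, hz1, one_mul, one_mul] at this
    linarith

lemma MM.neg {x : Kˣ} (hx : C.MM x) : C.MM (-x) := by
  have hxn1 : x ≠ -1 := hx.ne_neg_one
  have hnegx : -x = x * (-1) := by rw [mul_neg_one]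
  have hnx : ¬Kills C.Z (-x) := by
    rw [hnegx]; exact not_kills_mul_right hx.1 (kills_neg_one C.Z)
  have hxx : C.MM (x * x) := SL hx hx (not_kills_sq hx.1)
  have hnegx1 : -x ≠ 1 := by
    intro he
    exact hxn1 (by rw [← neg_neg x, he])
  have homx : omx (-x) = omx (x * x) * (omx x)⁻¹ := by
    apply Units.ext
    have h1 : (1 : K) - (x : K) ≠ 0 := by
      intro h0; exact units_coe_ne_one hx.ne_one (sub_eq_zero.mp h0).symm
    rw [Units.val_mul, omx_coe hnegx1, omx_coe hxx.ne_one, Units.val_inv_eq_inv_val,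
      omx_coe hx.ne_one, Units.val_neg, Units.val_mul]
    field_simp
    ring
  refine ⟨hnx, (C.c_zero_iff hnx).mpr ?_⟩
  intro f hf
  rw [homx, ev_mul, ev_inv, hxx.killsD_omx f hf, hx.killsD_omx f hf]
  ring

end BwdCtx

end BwdMM


section BwdHAp

variable {K : Type} [Field K]

namespace BwdCtx

variable {C : BwdCtx K}

lemma not_kills_neg {W : Submodule ℚ (GK K)} {x : Kˣ} (hx : ¬Kills W x) :
    ¬Kills W (-x) := by
  intro h
  apply hx
  have := kills_neg h
  rwa [neg_neg] at this

/-- `h` lies in the valuation ring's unit-positive part: it is killed by `Z` and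
multiplies `MM` into `MM`. -/
def HAp (C : BwdCtx K) (h : Kˣ) : Prop := Kills C.Z h ∧ ∀ m, C.MM m → C.MM (h * m)

lemma HAp.one : C.HAp 1 := ⟨kills_one C.Z, fun m hm => by rwa [one_mul]⟩

lemma HAp.mul {a b : Kˣ} (h1 : C.HAp a) (h2 : C.HAp b) : C.HAp (a * b) :=
  ⟨kills_mul h1.1 h2.1, fun m hm => by rw [mul_assoc]; exact h1.2 _ (h2.2 m hm)⟩

lemma HAp.neg_one : C.HAp (-1) :=
  ⟨kills_neg_one C.Z, fun m hm => by rw [neg_one_mul]; exact hm.neg⟩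

lemma HAp.MM_mul {h m : Kˣ} (hh : C.HAp h) (hm : C.MM m) : C.MM (h * m) := hh.2 m hm

lemma MM.mul_HAp {h m : Kˣ} (hm : C.MM m) (hh : C.HAp h) : C.MM (m * h) := by
  rw [mul_comm]; exact hh.2 m hm

lemma HAp.neg {h : Kˣ} (hh : C.HAp h) : C.HAp (-h) := by
  rw [← neg_one_mul]; exact HAp.neg_one.mul hh

lemma MM.mul_kills {x y : Kˣ} (hx : C.MM x) (hy : C.MM y) (hk : Kills C.Z (x * y)) :
    C.HAp (x * y) := by
  refine ⟨hk, ?_⟩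
  intro m hm
  by_cases hym : Kills C.Z (y * m)
  · by_cases hxm : Kills C.Z (x * m)
    · exfalso
      apply hm.1
      intro g hg
      have e1 := hxm g hg
      have e2 := hym g hg
      have e3 := hk g hg
      rw [ev_mul] at e1 e2 e3
      linarith
    · have h1 : C.MM (x * m) := SL hx hm hxm
      have h2 : ¬Kills C.Z ((x * m) * y) := by
        rw [mul_right_comm]
        exact not_kills_mul_left hk hm.1
      have h3 : C.MM ((x * m) * y) := SL h1 hy h2
      rw [mul_right_comm] at h3
      exact h3
  · have h1 : C.MM (y * m) := SL hy hm hym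
    have h2 : ¬Kills C.Z (x * (y * m)) := by
      rw [← mul_assoc]
      exact not_kills_mul_left hk hm.1
    have h3 : C.MM (x * (y * m)) := SL hx h1 h2
    rwa [mul_assoc]

lemma class_mul {x y : Kˣ} (hx : C.MM x ∨ C.HAp x) (hy : C.MM y ∨ C.HAp y) :
    C.MM (x * y) ∨ C.HAp (x * y) := by
  rcases hx with hx | hx
  · rcases hy with hy | hy
    · by_cases hk : Kills C.Z (x * y)
      · exact Or.inr (hx.mul_kills hy hk)
      · exact Or.inl (SL hx hy hk)
    · exact Or.inl (hx.mul_HAp hy)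
  · rcases hy with hy | hy
    · exact Or.inl (hx.2 y hy)
    · exact Or.inr (hx.mul hy)

lemma HAp_or_inv {h : Kˣ} (hh : Kills C.Z h) : C.HAp h ∨ C.HAp h⁻¹ := by
  by_cases hH : C.HAp h
  · exact Or.inl hH
  right
  have hex : ∃ m₀, C.MM m₀ ∧ ¬C.MM (h * m₀) := by
    by_contra hall
    push_neg at hall
    exact hH ⟨hh, hall⟩
  obtain ⟨m₀, hm₀, hnm⟩ := hex
  have hm0Z : ¬Kills C.Z (h * m₀) := not_kills_mul_left hh hm₀.1
  have hc1 : C.c (h * m₀) = 1 := by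
    rcases C.L1 hm0Z with h0 | h1
    · exact absurd ⟨hm0Z, h0⟩ hnm
    · exact h1
  have hn₀ : C.MM ((h * m₀)⁻¹) := MM_of_c_one hm0Z hc1
  refine ⟨kills_inv hh, ?_⟩
  intro m hm
  have key : (h * m₀)⁻¹ * (m₀ * m) = h⁻¹ * m := by
    rw [mul_inv_rev, mul_comm m₀⁻¹ h⁻¹, mul_assoc h⁻¹ m₀⁻¹ (m₀ * m),
      ← mul_assoc m₀⁻¹ m₀ m, inv_mul_cancel, one_mul]
  by_cases hmm : Kills C.Z (m₀ * m)
  · have hH2 : C.HAp (m₀ * m) := hm₀.mul_kills hm hmm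
    have h4 : C.MM ((m₀ * m) * (h * m₀)⁻¹) := hH2.2 _ hn₀
    rw [mul_comm (m₀ * m) ((h * m₀)⁻¹), key] at h4
    exact h4
  · have h1 : C.MM (m₀ * m) := SL hm₀ hm hmm
    have h2 : ¬Kills C.Z ((h * m₀)⁻¹ * (m₀ * m)) := by
      rw [key]
      exact not_kills_mul_left (kills_inv hh) hm.1
    have h3 := SL hn₀ h1 h2
    rw [key] at h3
    exact h3

lemma F3 {h : Kˣ} (hhZ : Kills C.Z h) (hhD : ¬Kills C.D h) (h1 : h ≠ 1) :
    Kills C.Z (omx h) := by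
  intro g hg
  obtain ⟨f, hf, hfh⟩ := not_kills hhD
  have hrel := altPair_ev (C.hAP g hg f hf) (omx_sum h1)
  rw [hhZ g hg, zero_mul] at hrel
  exact (mul_eq_zero.mp hrel.symm).resolve_right hfh

end BwdCtx

end BwdHAp


section BwdOmx

variable {K : Type} [Field K]

namespace BwdCtx

variable {C : BwdCtx K}

/-- If `w` has positive value then `1 - w` is a "unit-positive" element. -/
lemma MM.omx_HAp {w : Kˣ} (hw : C.MM w) : C.HAp (omx w) := by
  have hw1 : w ≠ 1 := hw.ne_one
  have hq1 : omx w ≠ 1 := omx_ne_one hw1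
  have hqZ : Kills C.Z (omx w) := hw.killsZ_omx
  have hqD : Kills C.D (omx w) := hw.killsD_omx
  have homxq : omx (omx w) = w := omx_omx hw1 hq1
  refine ⟨hqZ, ?_⟩
  intro m hm
  have hqm : ¬Kills C.Z (omx w * m) := not_kills_mul_left hqZ hm.1
  have hqm1 : omx w * m ≠ 1 := not_kills_ne_one hqm
  set z : Kˣ := zOf (omx w) m with hz_def
  have hz1 : z ≠ 1 := zOf_ne_one hq1 hm.ne_one hqm1
  have evz : ∀ f ∈ C.D, ev f z = -(ev f w) := by
    intro f hf
    rw [hz_def, ev_zOf, hqD f hf, hm.killsD_omx f hf, homxq]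
    ring
  obtain ⟨g₀, hg₀, hg₀w⟩ := not_kills hw.1
  have hzZ : ¬Kills C.Z z := by
    intro hk
    apply hg₀w
    have := hk g₀ hg₀
    rw [evz g₀ (C.hZD hg₀)] at this
    linarith
  have master : ∀ f ∈ C.D, C.c (omx w * m) * ev f m = (1 - C.c z) * ev f w := by
    intro f hf
    have eq1 := C.hc (omx w * m) hqm f hf
    rw [ev_mul, hqD f hf, zero_add] at eq1
    have eq2 : ev f (omx (omx w * m)) = ev f w + C.c z * ev f z := by
      rw [omx_mul_eq hq1 hm.ne_one hqm1, ev_mul, homxq, C.hc z hzZ f hf]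
    rw [eq1] at eq2
    rw [eq2, evz f hf]
    ring
  refine ⟨hqm, ?_⟩
  rcases C.L1 hzZ with hz0 | hz1'
  · -- c z = 0 leads to a 1/2 contradiction via the second decomposition
    exfalso
    have hcqm : C.c (omx w * m) = 1 := by
      rcases C.L1 hqm with h0 | h1
      · exfalso
        apply C.not_killsD hw.1
        intro f hf
        have := master f hf
        rw [h0, hz0, zero_mul, sub_zero, one_mul] at this
        linarith
      · exact h1
    have heq : ∀ f ∈ C.D, ev f m = ev f w := by
      intro f hf
      have := master f hf
      rw [hcqm, hz0, one_mul, sub_zero, one_mul] at this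
      exact this
    -- second decomposition, of 1 - m*(omx w)
    have hmq : ¬Kills C.Z (m * omx w) := by
      rw [mul_comm]; exact hqm
    have hmq1 : m * omx w ≠ 1 := not_kills_ne_one hmq
    set z₂ : Kˣ := zOf m (omx w) with hz2_def
    have hz₂1 : z₂ ≠ 1 := zOf_ne_one hm.ne_one hq1 hmq1
    have evz₂ : ∀ f ∈ C.D, ev f z₂ = 2 * ev f m := by
      intro f hf
      rw [hz2_def, ev_zOf, homxq, hm.killsD_omx f hf, heq f hf]
      ring
    obtain ⟨g₁, hg₁, hg₁m⟩ := not_kills hm.1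
    have hz₂Z : ¬Kills C.Z z₂ := by
      intro hk
      apply hg₁m
      have := hk g₁ hg₁
      rw [evz₂ g₁ (C.hZD hg₁)] at this
      linarith
    obtain ⟨f₀, hf₀, hf₀m⟩ := C.witD hm.1
    have master₂ : (2 * C.c z₂ - 1) * ev f₀ m = 0 := by
      have eq1 : ev f₀ (omx (m * omx w)) = C.c z₂ * (2 * ev f₀ m) := by
        rw [omx_mul_eq hm.ne_one hq1 hmq1, ev_mul, hm.killsD_omx f₀ hf₀, zero_add,
          C.hc z₂ hz₂Z f₀ hf₀, evz₂ f₀ hf₀]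
      have eq2 : ev f₀ (omx (m * omx w)) = ev f₀ m := by
        rw [mul_comm m (omx w)]
        have := C.hc (omx w * m) hqm f₀ hf₀
        rw [ev_mul, hqD f₀ hf₀, zero_add, hcqm, one_mul] at this
        exact this
      rw [eq2] at eq1
      linarith
    rcases mul_eq_zero.mp master₂ with h | h
    · have : C.c z₂ = 1 / 2 := by linarith
      rcases C.L1 hz₂Z with h0 | h1 <;> rw [this] at * <;> norm_num at *
    · exact hf₀m h
  · -- c z = 1 : conclude directly
    obtain ⟨f₀, hf₀, hf₀m⟩ := C.witD hm.1
    have := master f₀ hf₀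
    rw [hz1', sub_self, zero_mul] at this
    exact (mul_eq_zero.mp this).resolve_right hf₀m

/-- If `w` has positive value then `(1 - w)⁻¹` is also "unit-positive". -/
lemma MM.omx_inv_HAp {w : Kˣ} (hw : C.MM w) : C.HAp ((omx w)⁻¹) := by
  have hw1 : w ≠ 1 := hw.ne_one
  set v : Kˣ := -w * (omx w)⁻¹ with hv_def
  have hvZ : ¬Kills C.Z v := by
    rw [hv_def]
    exact not_kills_mul_right (not_kills_neg hw.1) (kills_inv hw.killsZ_omx)
  have hv1 : v ≠ 1 := not_kills_ne_one hvZ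
  have homxv : omx v = (omx w)⁻¹ := by
    apply Units.ext
    rw [omx_coe hv1, Units.val_inv_eq_inv_val, omx_coe hw1, hv_def, Units.val_mul,
      Units.val_neg, Units.val_inv_eq_inv_val, omx_coe hw1]
    have h1 : (1 : K) - (w : K) ≠ 0 := by
      intro h0; exact units_coe_ne_one hw1 (sub_eq_zero.mp h0).symm
    field_simp
    ring
  have hv : C.MM v := by
    refine ⟨hvZ, (C.c_zero_iff hvZ).mpr ?_⟩
    rw [homxv]
    exact kills_inv hw.killsD_omx
  have := hv.omx_HAp
  rwa [homxv] at this

/-- `1 - h` for a unit-positive `h ≠ 1` is either positive or unit-positive. -/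
lemma HAp.omx_mem {h : Kˣ} (hh : C.HAp h) (h1 : h ≠ 1) :
    C.MM (omx h) ∨ C.HAp (omx h) := by
  have hoh1 : omx h ≠ 1 := omx_ne_one h1
  by_cases ho : Kills C.Z (omx h)
  · right
    refine ⟨ho, ?_⟩
    intro m hm
    have hξ : ¬Kills C.Z (omx h * m) := not_kills_mul_left ho hm.1
    have hmq : ¬Kills C.Z (m * omx h) := by rw [mul_comm]; exact hξ
    have hmq1 : m * omx h ≠ 1 := not_kills_ne_one hmq
    set z₂ : Kˣ := zOf m (omx h) with hz2_def
    have hz₂eq : z₂ = ((-h) * (omx m)⁻¹) * m := by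
      rw [hz2_def, zOf, omx_omx h1 hoh1]
      rw [mul_comm m (-h), mul_assoc, mul_comm m ((omx m)⁻¹), ← mul_assoc]
    have hz₂ : C.MM z₂ := by
      rw [hz₂eq]
      exact (hh.neg.mul hm.omx_inv_HAp).2 m hm
    have hkD : Kills C.D (omx (m * omx h)) := by
      intro f hf
      rw [omx_mul_eq hm.ne_one hoh1 hmq1, ev_mul, hm.killsD_omx f hf, zero_add]
      exact hz₂.killsD_omx f hf
    refine ⟨hξ, (C.c_zero_iff hξ).mpr ?_⟩
    rwa [mul_comm (omx h) m]
  · left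
    have hDh : Kills C.D h := by
      by_contra hhD
      exact ho (F3 hh.1 hhD h1)
    refine ⟨ho, (C.c_zero_iff ho).mpr ?_⟩
    rw [omx_omx h1 hoh1]
    exact hDh

end BwdCtx

end BwdOmx


section BwdRing

variable {K : Type} [Field K]

namespace BwdCtx

variable {C : BwdCtx K}

/-- Membership in the valuation ring attached to the context. -/
def inA (C : BwdCtx K) (x : Kˣ) : Prop := C.MM x ∨ C.HAp x

lemma inA_one : C.inA 1 := Or.inr HAp.one

lemma inA_mul {x y : Kˣ} (hx : C.inA x) (hy : C.inA y) : C.inA (x * y) :=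
  class_mul hx hy

lemma inA_neg {x : Kˣ} (hx : C.inA x) : C.inA (-x) := by
  rcases hx with hx | hx
  · exact Or.inl hx.neg
  · exact Or.inr hx.neg

lemma inA_omx_neg {t : Kˣ} (ht : C.inA t) (ht1 : t ≠ -1) : C.inA (omx (-t)) := by
  have hnt1 : -t ≠ 1 := by
    intro he
    exact ht1 (by rw [← neg_neg t, he])
  rcases ht with ht | ht
  · exact Or.inr ht.neg.omx_HAp
  · exact ht.neg.omx_mem hnt1

lemma inA_or_inv (t : Kˣ) : C.inA t ∨ C.inA t⁻¹ := by
  rcases trichotomy (C := C) t with h | h | h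
  · rcases HAp_or_inv h with h' | h'
    · exact Or.inl (Or.inr h')
    · exact Or.inr (Or.inr h')
  · exact Or.inl (Or.inl h)
  · exact Or.inr (Or.inl h)

/-- The sum of two units, as a unit, when nonzero. -/
lemma inA_add {x y : Kˣ} (hx : C.inA x) (hy : C.inA y) {s : Kˣ}
    (hs : (s : K) = (x : K) + (y : K)) : C.inA s := by
  set t : Kˣ := x⁻¹ * y with ht_def
  have htcoe : (t : K) = (y : K) / (x : K) := by
    rw [ht_def, Units.val_mul, Units.val_inv_eq_inv_val]
    ring
  have hx0 : (x : K) ≠ 0 := Units.ne_zero x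
  have hy0 : (y : K) ≠ 0 := Units.ne_zero y
  have hs0 : (s : K) ≠ 0 := Units.ne_zero s
  have ht1 : t ≠ -1 := by
    intro he
    apply hs0
    rw [hs]
    have : (y : K) = -(x : K) := by
      have h2 : (t : K) = -1 := by rw [he]; simp
      rw [htcoe] at h2
      field_simp at h2
      linear_combination h2
    rw [this]; ring
  have hti1 : t⁻¹ ≠ -1 := by
    intro he
    apply ht1
    rw [← inv_inv t, he]
    norm_num
  rcases inA_or_inv (C := C) t with ht | ht
  · have hcl := inA_omx_neg ht ht1
    have hseq : s = x * omx (-t) := by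
      apply Units.ext
      rw [Units.val_mul, omx_coe (by intro he; exact ht1 (by rw [← neg_neg t, he]) : -t ≠ 1)]
      rw [Units.val_neg, htcoe, hs]
      field_simp
      ring
    rw [hseq]
    exact inA_mul hx hcl
  · have hcl := inA_omx_neg ht hti1
    have hseq : s = y * omx (-t⁻¹) := by
      apply Units.ext
      rw [Units.val_mul, omx_coe (by intro he; exact hti1 (by rw [← neg_neg t⁻¹, he]) : -t⁻¹ ≠ 1)]
      rw [Units.val_neg, Units.val_inv_eq_inv_val, htcoe, hs]
      field_simp
      ring
    rw [hseq]
    exact inA_mul hy hcl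

/-- The valuation subring attached to the context. -/
def Aring (C : BwdCtx K) : ValuationSubring K where
  carrier := {xk : K | xk = 0 ∨ ∃ x : Kˣ, (x : K) = xk ∧ C.inA x}
  zero_mem' := Or.inl rfl
  one_mem' := Or.inr ⟨1, Units.val_one, inA_one⟩
  add_mem' := by
    rintro a b (rfl | ⟨x, rfl, hx⟩) hb
    · simpa using hb
    rcases hb with rfl | ⟨y, rfl, hy⟩
    · simp only [add_zero]
      exact Or.inr ⟨x, rfl, hx⟩
    by_cases hs : (x : K) + (y : K) = 0
    · exact Or.inl hs
    · exact Or.inr ⟨Units.mk0 _ hs, rfl, inA_add hx hy rfl⟩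
  mul_mem' := by
    rintro a b (rfl | ⟨x, rfl, hx⟩) hb
    · simp
    rcases hb with rfl | ⟨y, rfl, hy⟩
    · simp
    · exact Or.inr ⟨x * y, Units.val_mul x y, inA_mul hx hy⟩
  neg_mem' := by
    rintro a (rfl | ⟨x, rfl, hx⟩)
    · simp
    · exact Or.inr ⟨-x, Units.val_neg x, inA_neg hx⟩
  mem_or_inv_mem' := by
    intro xk
    by_cases h0 : xk = 0
    · exact Or.inl (Or.inl h0)
    rcases inA_or_inv (C := C) (Units.mk0 xk h0) with h | h
    · exact Or.inl (Or.inr ⟨Units.mk0 xk h0, rfl, h⟩)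
    · refine Or.inr (Or.inr ⟨(Units.mk0 xk h0)⁻¹, ?_, h⟩)
      simp

lemma unit_mem_Aring {x : Kˣ} : (x : K) ∈ C.Aring ↔ C.inA x := by
  constructor
  · rintro (h0 | ⟨x', hx', hA⟩)
    · exact absurd h0 (Units.ne_zero x)
    · rwa [show x' = x from Units.ext hx'] at hA
  · intro h
    exact Or.inr ⟨x, rfl, h⟩

end BwdCtx

end BwdRing


section BwdVerif

variable {K : Type} [Field K]

namespace BwdCtx

variable {C : BwdCtx K}

lemma mem_Aring_unitGroup_iff {x : Kˣ} :
    x ∈ C.Aring.unitGroup ↔ C.HAp x ∧ C.HAp x⁻¹ := by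
  constructor
  · intro h
    have h1 : (x : K) ∈ C.Aring :=
      C.Aring.mem_of_valuation_le_one _ ((C.Aring.mem_unitGroup_iff x).mp h).le
    have hinv : x⁻¹ ∈ C.Aring.unitGroup := inv_mem h
    have h2 : ((x⁻¹ : Kˣ) : K) ∈ C.Aring :=
      C.Aring.mem_of_valuation_le_one _ ((C.Aring.mem_unitGroup_iff x⁻¹).mp hinv).le
    have hA1 : C.inA x := unit_mem_Aring.mp h1
    have hA2 : C.inA x⁻¹ := unit_mem_Aring.mp h2
    have hx : C.HAp x := by
      rcases hA1 with hM | hH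
      · exfalso
        rcases hA2 with hM' | hH'
        · exact hM.not_inv hM'
        · exact hM.1 (kills_of_inv hH'.1)
      · exact hH
    have hxi : C.HAp x⁻¹ := by
      rcases hA2 with hM' | hH'
      · exact absurd (kills_inv hx.1) hM'.1
      · exact hH'
    exact ⟨hx, hxi⟩
  · rintro ⟨h1, h2⟩
    apply mem_unitGroup_of
    · exact unit_mem_Aring.mpr (Or.inr h1)
    · have := unit_mem_Aring.mpr (Or.inr h2)
      rwa [Units.val_inv_eq_inv_val] at this

lemma killsZ_unitGroup {g : GK K} (hg : g ∈ C.Z) {x : Kˣ}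
    (hx : x ∈ C.Aring.unitGroup) : ev g x = 0 :=
  (mem_Aring_unitGroup_iff.mp hx).1.1 g hg

/-- The (k)-lemma: a unit-positive `a` whose inverse is not in the ring has `1 - a`
killed by `D`. -/
lemma HAp.killsD_omx_of_not_inv {a : Kˣ} (ha : C.HAp a) (hnot : ¬C.inA a⁻¹) :
    Kills C.D (omx a) := by
  have ha1 : a ≠ 1 := by
    intro he
    exact hnot (by rw [he, inv_one]; exact inA_one)
  have hnH : ¬C.HAp a⁻¹ := fun h => hnot (Or.inr h)
  have hex : ∃ m₁, C.MM m₁ ∧ ¬C.MM (a⁻¹ * m₁) := by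
    by_contra hall
    push_neg at hall
    exact hnH ⟨kills_inv ha.1, hall⟩
  obtain ⟨m₁, hm₁, hnm⟩ := hex
  have hm1Z : ¬Kills C.Z (a⁻¹ * m₁) := not_kills_mul_left (kills_inv ha.1) hm₁.1
  have hc1 : C.c (a⁻¹ * m₁) = 1 := by
    rcases C.L1 hm1Z with h0 | h1
    · exact absurd ⟨hm1Z, h0⟩ hnm
    · exact h1
  have hm₂ : C.MM ((a⁻¹ * m₁)⁻¹) := MM_of_c_one hm1Z hc1
  set m₂ : Kˣ := (a⁻¹ * m₁)⁻¹ with hm2_def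
  have hdecomp : a = m₂ * m₁ := by
    rw [hm2_def, mul_inv_rev, inv_inv, mul_comm m₁⁻¹ a, mul_assoc, inv_mul_cancel, mul_one]
  -- first: 1 - a is killed by Z
  have hoZ : Kills C.Z (omx a) := by
    by_contra ho
    have hoh1 : omx a ≠ 1 := omx_ne_one ha1
    rcases C.L1 ho with h0 | h1
    · -- then (omx a)⁻¹-ish gives a⁻¹ unit-positive, contradiction
      have hMM : C.MM (omx a) := ⟨ho, h0⟩
      have := hMM.omx_inv_HAp
      rw [omx_omx ha1 hoh1] at this
      exact hnH this
    · have hMM : C.MM ((omx a)⁻¹) := MM_of_c_one ho h1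
      have hH := hMM.omx_inv_HAp
      have homx : omx ((omx a)⁻¹) = -(omx a)⁻¹ * a := by
        rw [omx_inv_eq hoh1, omx_omx ha1 hoh1]
      rw [homx] at hH
      -- hH : HAp ((-(omx a)⁻¹ * a)⁻¹)
      have hre : (-(omx a)⁻¹ * a)⁻¹ = a⁻¹ * (-(omx a)) := by
        rw [mul_inv_rev, inv_neg, inv_inv]
      rw [hre] at hH
      have hM2 : C.MM (-(omx a)⁻¹) := hMM.neg
      have : C.MM ((a⁻¹ * (-(omx a))) * (-(omx a)⁻¹)) := hH.2 _ hM2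
      have heq : (a⁻¹ * (-(omx a))) * (-(omx a)⁻¹) = a⁻¹ := by
        rw [mul_assoc]
        have : (-(omx a)) * (-(omx a)⁻¹) = 1 := by
          rw [neg_mul_neg, mul_inv_cancel]
        rw [this, mul_one]
      rw [heq] at this
      exact this.1 (kills_inv ha.1)
  -- now the decomposition argument
  have hm21 : m₂ ≠ 1 := hm₂.ne_one
  have hm11 : m₁ ≠ 1 := hm₁.ne_one
  have hmm1 : m₂ * m₁ ≠ 1 := by rw [← hdecomp]; exact ha1
  set z : Kˣ := zOf m₂ m₁ with hz_def
  have hz1 : z ≠ 1 := zOf_ne_one hm21 hm11 hmm1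
  have hgz : ∀ g ∈ C.Z, ev g z = ev g m₂ := by
    intro g hg
    rw [hz_def, ev_zOf, hm₁.killsZ_omx g hg, hm₂.killsZ_omx g hg]
    ring
  obtain ⟨g₀, hg₀, hg₀m⟩ := not_kills hm₂.1
  have hzZ : ¬Kills C.Z z := by
    intro hk
    apply hg₀m
    rw [← hgz g₀ hg₀]
    exact hk g₀ hg₀
  have hcz : C.c z = 0 := by
    have h2 := hoZ g₀ hg₀
    rw [hdecomp, omx_mul_eq hm21 hm11 hmm1, ev_mul, hm₂.killsZ_omx g₀ hg₀, zero_add,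
      C.hcZ hzZ g₀ hg₀, hgz g₀ hg₀] at h2
    exact (mul_eq_zero.mp h2).resolve_right hg₀m
  intro f hf
  rw [hdecomp, omx_mul_eq hm21 hm11 hmm1, ev_mul, hm₂.killsD_omx f hf, zero_add]
  rw [C.hc z hzZ f hf, hcz, zero_mul]

/-- Every `f ∈ D` kills the principal units of the constructed ring. -/
lemma principal_killsD {f : GK K} (hf : f ∈ C.D) :
    ∀ u' ∈ C.Aring.principalUnitGroup, ev f u' = 0 := by
  intro u' hu'
  by_cases h1 : u' = 1
  · rw [h1]; exact ev_one f
  set a : Kˣ := omx u' with ha_def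
  have hacoe : ((a : Kˣ) : K) = 1 - (u' : K) := omx_coe h1
  have hva : C.Aring.valuation (a : K) < 1 := by
    have heq : (a : K) = -((u' : K) - 1) := by rw [hacoe]; ring
    rw [heq, Valuation.map_neg]
    exact (C.Aring.mem_principalUnitGroup_iff u').mp hu'
  have haA : (a : K) ∈ C.Aring := C.Aring.mem_of_valuation_le_one _ hva.le
  have hainv : ((a : K))⁻¹ ∉ C.Aring := inv_not_mem_of_val_lt_one C.Aring hva
  have ha1 : a ≠ 1 := omx_ne_one h1
  have homx : omx a = u' := omx_omx h1 ha1
  rcases unit_mem_Aring.mp haA with hM | hH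
  · rw [← homx]
    exact hM.killsD_omx f hf
  · have hnot : ¬C.inA a⁻¹ := by
      intro h
      apply hainv
      have := unit_mem_Aring.mpr h
      rwa [Units.val_inv_eq_inv_val] at this
    rw [← homx]
    exact hH.killsD_omx_of_not_inv hnot f hf

end BwdCtx

end BwdVerif


section BwdFinal

variable {K : Type} [Field K]

namespace BwdCtx

variable {C : BwdCtx K}

/-- Characterization of the centralizer relation for functionals respecting `c`. -/
lemma altPair_of_char {f : GK K}
    (hchar : ∀ x : Kˣ, ¬Kills C.Z x → ev f (omx x) = C.c x * ev f x) :
    ∀ g ∈ C.Z, AltPair f g := by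
  intro g hg x y hxy
  show ev f x * ev g y = ev f y * ev g x
  have hx1 : x ≠ 1 := by
    intro he
    rw [he, Units.val_one] at hxy
    have : (y : K) = 0 := by linear_combination hxy
    exact Units.ne_zero y this
  have hy_eq : y = omx x := Units.ext (by rw [omx_coe hx1]; linear_combination hxy)
  rw [hy_eq]
  by_cases hx : Kills C.Z x
  · by_cases ho : Kills C.Z (omx x)
    · rw [hx g hg, ho g hg]; ring
    · have h2 := hchar (omx x) ho
      rw [omx_omx hx1 (omx_ne_one hx1)] at h2
      have h3 := C.hcZ ho g hg
      rw [omx_omx hx1 (omx_ne_one hx1)] at h3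
      rw [h2, h3]; ring
  · have h2 := hchar x hx
    have h3 := C.hcZ hx g hg
    rw [h2, h3]; ring

lemma Ival_eq (T : Subgroup Kˣ) (hZG : C.Z ≤ GKrel K T)
    (hmax : ∀ f : GK K, (∀ g ∈ C.Z, AltPair f g) → f ∈ GKrel K T → f ∈ C.D)
    (hZeq : ∀ f ∈ C.D, (∀ f' ∈ C.D, AltPair f f') → f ∈ C.Z) :
    Ival K C.Aring ⊓ GKrel K T = C.Z := by
  apply le_antisymm
  · intro f hf
    obtain ⟨hfI, hfG⟩ := Submodule.mem_inf.mp hf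
    have hfI' : ∀ x : Kˣ, x ∈ C.Aring.unitGroup → ev f x = 0 :=
      fun x hx => (mem_Ival_iff.mp hfI) x hx
    have hchar : ∀ x : Kˣ, ¬Kills C.Z x → ev f (omx x) = C.c x * ev f x := by
      intro x hx
      have hx1 : x ≠ 1 := not_kills_ne_one hx
      rcases C.L1 hx with h0 | h1
      · have hMM : C.MM x := ⟨hx, h0⟩
        have : omx x ∈ C.Aring.unitGroup :=
          mem_Aring_unitGroup_iff.mpr ⟨hMM.omx_HAp, hMM.omx_inv_HAp⟩
        rw [hfI' _ this, h0, zero_mul]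
      · have hMM : C.MM x⁻¹ := MM_of_c_one hx h1
        have homx : omx x = (-x⁻¹)⁻¹ * omx x⁻¹ := by
          rw [omx_inv_eq hx1, inv_mul_cancel_left]
        have hU : omx x⁻¹ ∈ C.Aring.unitGroup :=
          mem_Aring_unitGroup_iff.mpr ⟨hMM.omx_HAp, hMM.omx_inv_HAp⟩
        rw [homx, ev_mul, hfI' _ hU, add_zero, ev_inv, ev_neg, ev_inv, neg_neg, h1,
          one_mul]
    have hfD : f ∈ C.D := hmax f (altPair_of_char hchar) hfG
    have hfCD : ∀ f' ∈ C.D, AltPair f f' := by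
      intro f' hf'
      have := altPair_of_val C.Aring f' f
        (fun x hx => hfI' x hx)
        (fun x hx => principal_killsD hf' x hx)
      exact altPair_symm this
    exact hZeq f hfD hfCD
  · intro g hg
    rw [Submodule.mem_inf]
    constructor
    · rw [mem_Ival_iff]
      intro x hx
      exact killsZ_unitGroup hg hx
    · exact hZG hg

lemma Dval_eq (T : Subgroup Kˣ) (hDG : C.D ≤ GKrel K T)
    (hmax : ∀ f : GK K, (∀ g ∈ C.Z, AltPair f g) → f ∈ GKrel K T → f ∈ C.D) :
    Dval K C.Aring ⊓ GKrel K T = C.D := by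
  apply le_antisymm
  · intro f hf
    obtain ⟨hfDv, hfG⟩ := Submodule.mem_inf.mp hf
    apply hmax f _ hfG
    intro g hg
    exact altPair_of_val C.Aring f g
      (fun x hx => killsZ_unitGroup hg hx)
      (fun x hx => (mem_Dval_iff.mp hfDv) x hx)
  · intro f hf
    rw [Submodule.mem_inf]
    constructor
    · rw [mem_Dval_iff]
      intro x hx
      exact principal_killsD hf x hx
    · exact hDG hf

lemma min_prop (B : ValuationSubring K)
    (hB : ∀ g ∈ C.Z, ∀ x : Kˣ, x ∈ B.unitGroup → ev g x = 0) : B ≤ C.Aring := by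
  -- elements of positive value are in B with inverse not in B
  have MM_mem_B : ∀ m : Kˣ, C.MM m → (m : K) ∈ B ∧ ((m : K))⁻¹ ∉ B := by
    intro m hm
    have hmB : (m : K) ∈ B := by
      by_contra hmB
      have hinvB : ((m : K))⁻¹ ∈ B := (B.mem_or_inv_mem _).resolve_left hmB
      have hinv2 : ((m⁻¹ : Kˣ) : K) ∈ B := by rwa [Units.val_inv_eq_inv_val]
      have hv : B.valuation ((m⁻¹ : Kˣ) : K) < 1 := by
        apply val_lt_one_of B hinv2
        rw [Units.val_inv_eq_inv_val, inv_inv]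
        exact hmB
      have hm1 : m⁻¹ ≠ 1 := by
        intro he
        exact hm.ne_one (by rw [← inv_inv m, he, inv_one])
      have hoU : omx m⁻¹ ∈ B.unitGroup := by
        rw [ValuationSubring.mem_unitGroup_iff, omx_coe hm1]
        exact val_one_sub_of_lt B hv
      have hkZ : Kills C.Z (omx m⁻¹) := fun g hg => hB g hg _ hoU
      have : C.c m⁻¹ = 0 := (C.c_zero_iffZ (not_kills_inv hm.1)).mpr hkZ
      rw [C.c_inv hm.1, hm.2, sub_zero] at this
      exact one_ne_zero this
    refine ⟨hmB, ?_⟩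
    intro hinv
    exact hm.1 (fun g hg => hB g hg m (mem_unitGroup_of B hmB hinv))
  -- any element of B killed by Z multiplies MM into MM
  have mk_MM : ∀ w : Kˣ, Kills C.Z w → (w : K) ∈ B → ∀ m, C.MM m → C.MM (w * m) := by
    intro w hwZ hwB m hm
    obtain ⟨hmB, hmBi⟩ := MM_mem_B m hm
    have hwm : ¬Kills C.Z (w * m) := not_kills_mul_left hwZ hm.1
    have hwm1 : w * m ≠ 1 := not_kills_ne_one hwm
    have hwmB : ((w * m : Kˣ) : K) ∈ B := by
      rw [Units.val_mul]
      exact mul_mem hwB hmB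
    have hwmI : (((w * m : Kˣ) : K))⁻¹ ∉ B := by
      intro h
      apply hmBi
      have heq : ((m : K))⁻¹ = (w : K) * (((w * m : Kˣ) : K))⁻¹ := by
        rw [Units.val_mul, mul_inv]
        have hw0 : (w : K) ≠ 0 := Units.ne_zero w
        field_simp
      rw [heq]
      exact mul_mem hwB h
    have hv : B.valuation ((w * m : Kˣ) : K) < 1 := val_lt_one_of B hwmB hwmI
    have hoU : omx (w * m) ∈ B.unitGroup := by
      rw [ValuationSubring.mem_unitGroup_iff, omx_coe hwm1]
      exact val_one_sub_of_lt B hv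
    exact MM_of_killsZ_omx hwm (fun g hg => hB g hg _ hoU)
  -- the inclusion
  intro bk hbk
  by_cases h0 : bk = 0
  · rw [h0]; exact C.Aring.zero_mem
  set b : Kˣ := Units.mk0 bk h0 with hb_def
  have hbkB : ((b : Kˣ) : K) ∈ B := hbk
  by_cases hbinv : (bk)⁻¹ ∈ B
  · -- b is a unit of B
    have hbU : b ∈ B.unitGroup := mem_unitGroup_of B hbkB hbinv
    have hKb : Kills C.Z b := fun g hg => hB g hg b hbU
    exact Or.inr ⟨b, rfl, Or.inr ⟨hKb, mk_MM b hKb hbkB⟩⟩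
  · have hvb : B.valuation (b : K) < 1 := val_lt_one_of B hbkB hbinv
    have hb1 : b ≠ 1 := by
      intro he
      apply hbinv
      have : bk = 1 := by rw [← Units.val_mk0 (a := bk) h0, ← hb_def, he, Units.val_one]
      rw [this, inv_one]
      exact B.one_mem
    have hoU : omx b ∈ B.unitGroup := by
      rw [ValuationSubring.mem_unitGroup_iff, omx_coe hb1]
      exact val_one_sub_of_lt B hvb
    have hoZ : Kills C.Z (omx b) := fun g hg => hB g hg _ hoU
    by_cases hKb : Kills C.Z b
    · exact Or.inr ⟨b, rfl, Or.inr ⟨hKb, mk_MM b hKb hbkB⟩⟩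
    · exact Or.inr ⟨b, rfl, Or.inl (MM_of_killsZ_omx hKb hoZ)⟩

end BwdCtx

end BwdFinal

lemma backward_main (K : Type) [Field K] (T : Subgroup Kˣ)
    (D : Submodule ℚ (GK K)) (hsub : D ≤ GKrel K T)
    (h1 : RCentre K D ≠ D)
    (h2 : RCentralizer K (RCentre K D) ⊓ GKrel K T = D) :
    ∃ A : ValuationSubring K, IsVisible K T A ∧
      RCentre K D = Ival K A ⊓ GKrel K T ∧ D = Dval K A ⊓ GKrel K T := by
  set Z : Submodule ℚ (GK K) := RCentre K D with hZ_def
  have hZD : Z ≤ D := inf_le_left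
  have hAP : ∀ g ∈ Z, ∀ f ∈ D, AltPair g f := fun g hg f hf =>
    mem_RCentralizer_iff.mp (Submodule.mem_inf.mp hg).2 f hf
  -- choose the coefficient function c
  have hcex : ∀ x : Kˣ, ∃ cx : ℚ, ¬Kills Z x → ∀ f ∈ D, ev f (omx x) = cx * ev f x := by
    intro x
    by_cases hx : Kills Z x
    · exact ⟨0, fun h => absurd hx h⟩
    · obtain ⟨g, hgZ, hgx⟩ := not_kills hx
      refine ⟨ev g (omx x) / ev g x, fun _ f hf => ?_⟩
      have hx1 : x ≠ 1 := not_kills_ne_one hx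
      have hrel := altPair_ev (hAP g hgZ f hf) (omx_sum hx1)
      field_simp
      linear_combination hrel
  choose c hc using hcex
  -- extract the independent pair
  have hnotle : ¬ D ≤ RCentralizer K D := fun hle =>
    h1 (show RCentre K D = D from inf_eq_left.mpr hle)
  obtain ⟨f₀, hf₀D, hf₀C⟩ : ∃ f₀ ∈ D, f₀ ∉ RCentralizer K D := by
    by_contra h
    push_neg at h
    exact hnotle h
  have hex1 : ¬ ∀ f₁ ∈ D, AltPair f₀ f₁ := fun hall =>
    hf₀C (mem_RCentralizer_iff.mpr hall)
  push_neg at hex1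
  obtain ⟨f₁, hf₁D, hnAP⟩ := hex1
  unfold AltPair at hnAP
  push_neg at hnAP
  obtain ⟨x, y, hxy, hne⟩ := hnAP
  have hx1 : x ≠ 1 := by
    intro he
    rw [he, Units.val_one] at hxy
    have : (y : K) = 0 := by linear_combination hxy
    exact Units.ne_zero y this
  have hy_eq : y = omx x := Units.ext (by rw [omx_coe hx1]; linear_combination hxy)
  have hdet : ev f₀ x * ev f₁ (omx x) - ev f₀ (omx x) * ev f₁ x ≠ 0 := by
    rw [← hy_eq]
    exact sub_ne_zero.mpr hne
  have hindep : ∀ a b : ℚ, (∀ f ∈ D, a * ev f x + b * ev f (omx x) = 0) →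
      a = 0 ∧ b = 0 := by
    intro a b hab
    have e0 := hab f₀ hf₀D
    have e1 := hab f₁ hf₁D
    have ha : a * (ev f₀ x * ev f₁ (omx x) - ev f₀ (omx x) * ev f₁ x) = 0 := by
      linear_combination ev f₁ (omx x) * e0 - ev f₀ (omx x) * e1
    have hb : b * (ev f₀ x * ev f₁ (omx x) - ev f₀ (omx x) * ev f₁ x) = 0 := by
      linear_combination (-(ev f₁ x)) * e0 + ev f₀ x * e1
    exact ⟨(mul_eq_zero.mp ha).resolve_right hdet,
      (mul_eq_zero.mp hb).resolve_right hdet⟩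
  have huZ : Kills Z x := by
    by_contra hx
    have hvec : ∀ f ∈ D, (c x) * ev f x + (-1 : ℚ) * ev f (omx x) = 0 := by
      intro f hf
      have h3 := hc x hx f hf
      linear_combination (-1 : ℚ) * h3
    obtain ⟨_, hb⟩ := hindep _ _ hvec
    norm_num at hb
  have huoZ : Kills Z (omx x) := by
    by_contra ho
    have homx := omx_omx hx1 (omx_ne_one hx1)
    have hvec : ∀ f ∈ D, (1 : ℚ) * ev f x + (-(c (omx x))) * ev f (omx x) = 0 := by
      intro f hf
      have h3 := hc (omx x) ho f hf
      rw [homx] at h3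
      linear_combination h3
    obtain ⟨h1', _⟩ := hindep _ _ hvec
    norm_num at h1'
  -- assemble the context
  set C : BwdCtx K := ⟨Z, D, c, hZD, hAP, hc, x, hx1, huZ, huoZ, hindep⟩ with hC_def
  have hZG : Z ≤ GKrel K T := le_trans hZD hsub
  have hmax : ∀ f : GK K, (∀ g ∈ Z, AltPair f g) → f ∈ GKrel K T → f ∈ D := by
    intro f hfC hfG
    rw [← h2]
    exact Submodule.mem_inf.mpr ⟨mem_RCentralizer_iff.mpr hfC, hfG⟩
  have hZeq : ∀ f ∈ D, (∀ f' ∈ D, AltPair f f') → f ∈ Z := by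
    intro f hf hC'
    exact Submodule.mem_inf.mpr ⟨hf, mem_RCentralizer_iff.mpr hC'⟩
  have hIval : Ival K C.Aring ⊓ GKrel K T = Z := BwdCtx.Ival_eq T hZG hmax hZeq
  have hDval : Dval K C.Aring ⊓ GKrel K T = D := BwdCtx.Dval_eq T hsub hmax
  refine ⟨C.Aring, ⟨?_, ?_, ?_, ?_⟩, hIval.symm, hDval.symm⟩
  · rw [hIval, hDval]
  · rw [hIval, hDval]
    exact h1
  · exact inf_le_left
  · intro B hB
    apply BwdCtx.min_prop B
    intro g hg x' hx'
    rw [hIval] at hB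
    exact mem_Ival_iff.mp (hB hg) x' hx'

/-- Characterization of the pairs `(I_v ∩ 𝒢_{K|T}, D_v ∩ 𝒢_{K|T})` for
`T`-visible valuations `v` among closed subspaces `𝒟 ⊆ 𝒢_{K|T}`. -/
theorem detect_visible_valuations (K : Type) [Field K] (T : Subgroup Kˣ)
    (D : Submodule ℚ (GK K)) (hD : IsClosedSubspace K D) (hsub : D ≤ GKrel K T) :
    (∃ A : ValuationSubring K, IsVisible K T A ∧
        RCentre K D = Ival K A ⊓ GKrel K T ∧ D = Dval K A ⊓ GKrel K T) ↔
      (RCentre K D ≠ D ∧ RCentralizer K (RCentre K D) ⊓ GKrel K T = D) := by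
  constructor
  · rintro ⟨A, ⟨hvis1, hvis2, hvis3⟩, hZ, hDv⟩
    constructor
    · intro h
      apply hvis2
      rw [← hZ, h]
      exact hDv
    · apply le_antisymm
      · intro f hf
        obtain ⟨hfC, hfG⟩ := Submodule.mem_inf.mp hf
        rw [hDv, Submodule.mem_inf]
        refine ⟨?_, hfG⟩
        apply forward_sub T A hvis3.2 f
        intro g hg
        exact mem_RCentralizer_iff.mp hfC g (by rw [hZ]; exact hg)
      · intro f hf
        rw [Submodule.mem_inf]
        refine ⟨?_, hsub hf⟩
        rw [mem_RCentralizer_iff]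
        intro g hg
        have hg2 := (Submodule.mem_inf.mp hg).2
        exact altPair_symm (mem_RCentralizer_iff.mp hg2 f hf)
  · rintro ⟨h1, h2⟩
    exact backward_main K T D hsub h1 h2

end Paper
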